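/- arXiv:2404.07319 — 3 statements merged into one kernel-verified Lean document; each statement's English description precedes it below -/
import Mathlib

section
/- Let x, y be coprime integers. For any 0 ≤ k < j ≤ (r−1)/2, if a prime ideal π of O_K divides both f_k·O_K and f_j·O_K, then π = β. In other words, the factors f_0, f_1, …, f_{(r−1)/2} are pairwise coprime outside β. -/
set_option maxHeartbeats 1000000
set_option synthInstance.maxHeartbeats 400000

open NumberField IntermediateField IsDedekindDomain Multiplicative Polynomial

theorem norm_two_sub_gen {L : Type} [Field L] [NumberField L] {r : ℕ} (hr : r.Prime) (hr5 : 5 < r)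
    {ζ : L} (hζ : IsPrimitiveRoot ζ r) :
    Algebra.norm ℚ ((2 : ℚ⟮ζ + ζ⁻¹⟯) - AdjoinSimple.gen ℚ (ζ + ζ⁻¹)) = (r : ℚ) := by
  have hr1 : 1 < r := by omega
  have hrpos : 0 < r := by omega
  have hζ0 : ζ ≠ 0 := hζ.ne_zero (by omega)
  set θ := ζ + ζ⁻¹ with hθdef
  have hθint : IsIntegral ℚ θ := IsIntegral.of_finite ℚ θ
  set χ := minpoly ℚ θ with hχdef
  have hχmonic : χ.Monic := minpoly.monic hθint
  set d := χ.natDegree with hddef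
  have hd0 : 0 < d := minpoly.natDegree_pos hθint
  set R : Polynomial ℚ :=
    ∑ i ∈ Finset.range (d + 1), C (χ.coeff i) * (X ^ 2 + 1) ^ i * X ^ (d - i) with hRdef
  have hζθ : ζ * θ = ζ ^ 2 + 1 := by
    rw [hθdef, mul_add, mul_inv_cancel₀ hζ0, sq]
  -- R(ζ) = 0
  have haevalR : Polynomial.aeval ζ R = 0 := by
    have hterm : ∀ i ∈ Finset.range (d + 1),
        Polynomial.aeval ζ (C (χ.coeff i) * (X ^ 2 + 1) ^ i * X ^ (d - i)) =
        (χ.coeff i • θ ^ i) * ζ ^ d := by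
      intro i hi
      rw [Finset.mem_range] at hi
      have hpow : (ζ ^ 2 + 1) ^ i * ζ ^ (d - i) = θ ^ i * ζ ^ d := by
        rw [← hζθ, mul_pow, mul_comm (ζ ^ i), mul_assoc, ← pow_add,
          Nat.add_sub_cancel' (by omega : i ≤ d)]
      simp only [map_mul, map_pow, aeval_C, aeval_X, map_add, map_one]
      rw [mul_assoc, hpow, Algebra.smul_def, mul_assoc]
    rw [hRdef, map_sum, Finset.sum_congr rfl hterm, ← Finset.sum_mul, ← Polynomial.aeval_eq_sum_range,
      minpoly.aeval, zero_mul]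
  -- coefficient of R at 2d is 1
  have hcoeffR : R.coeff (2 * d) = 1 := by
    rw [hRdef, Polynomial.finset_sum_coeff]
    rw [Finset.sum_eq_single d]
    · have hlc : χ.coeff d = 1 := hχmonic
      rw [hlc, Nat.sub_self, pow_zero, mul_one, map_one, one_mul]
      have hmon : ((X ^ 2 + 1 : Polynomial ℚ) ^ d).Monic := by
        apply Polynomial.Monic.pow
        have : (X ^ 2 + 1 : Polynomial ℚ) = X ^ 2 + C 1 := by rw [map_one]
        rw [this]
        exact Polynomial.monic_X_pow_add_C (1 : ℚ) (by omega)
      have hdeg : ((X ^ 2 + 1 : Polynomial ℚ) ^ d).natDegree = 2 * d := by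
        rw [Polynomial.natDegree_pow]
        have : (X ^ 2 + 1 : Polynomial ℚ) = X ^ 2 + C 1 := by rw [map_one]
        rw [this, Polynomial.natDegree_X_pow_add_C]
        ring
      rw [← hdeg]
      exact hmon.coeff_natDegree
    · intro i hi hne
      rw [Finset.mem_range] at hi
      apply Polynomial.coeff_eq_zero_of_natDegree_lt
      calc (C (χ.coeff i) * (X ^ 2 + 1) ^ i * X ^ (d - i)).natDegree
          ≤ (C (χ.coeff i) * (X ^ 2 + 1) ^ i).natDegree + (X ^ (d - i) : Polynomial ℚ).natDegree :=
            Polynomial.natDegree_mul_le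
        _ ≤ (C (χ.coeff i)).natDegree + ((X ^ 2 + 1 : Polynomial ℚ) ^ i).natDegree
              + (X ^ (d - i) : Polynomial ℚ).natDegree := by
            exact Nat.add_le_add_right Polynomial.natDegree_mul_le _
        _ ≤ 0 + 2 * i + (d - i) := by
            gcongr
            · exact le_of_eq (Polynomial.natDegree_C _)
            · calc ((X ^ 2 + 1 : Polynomial ℚ) ^ i).natDegree ≤ i * (X ^ 2 + 1 : Polynomial ℚ).natDegree :=
                  Polynomial.natDegree_pow_le
                _ ≤ 2 * i := by
                  have : (X ^ 2 + 1 : Polynomial ℚ).natDegree ≤ 2 := by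
                    apply le_trans (Polynomial.natDegree_add_le _ _)
                    simp [Polynomial.natDegree_X_pow]
                  calc i * (X ^ 2 + 1 : Polynomial ℚ).natDegree ≤ i * 2 := Nat.mul_le_mul_left i this
                    _ = 2 * i := by ring
            · exact le_of_eq (Polynomial.natDegree_X_pow _)
        _ < 2 * d := by omega
    · intro h
      exact absurd (Finset.self_mem_range_succ d) h
  have hRdegle : R.natDegree ≤ 2 * d := by
    rw [hRdef]
    apply Polynomial.natDegree_sum_le_of_forall_le
    intro i hi
    rw [Finset.mem_range] at hi
    calc (C (χ.coeff i) * (X ^ 2 + 1) ^ i * X ^ (d - i)).natDegree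
        ≤ (C (χ.coeff i) * (X ^ 2 + 1) ^ i).natDegree + (X ^ (d - i) : Polynomial ℚ).natDegree :=
          Polynomial.natDegree_mul_le
      _ ≤ (C (χ.coeff i)).natDegree + ((X ^ 2 + 1 : Polynomial ℚ) ^ i).natDegree
            + (X ^ (d - i) : Polynomial ℚ).natDegree := by
          exact Nat.add_le_add_right Polynomial.natDegree_mul_le _
      _ ≤ 0 + 2 * i + (d - i) := by
          gcongr
          · exact le_of_eq (Polynomial.natDegree_C _)
          · calc ((X ^ 2 + 1 : Polynomial ℚ) ^ i).natDegree ≤ i * (X ^ 2 + 1 : Polynomial ℚ).natDegree :=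
                Polynomial.natDegree_pow_le
              _ ≤ 2 * i := by
                have : (X ^ 2 + 1 : Polynomial ℚ).natDegree ≤ 2 := by
                  apply le_trans (Polynomial.natDegree_add_le _ _)
                  simp [Polynomial.natDegree_X_pow]
                calc i * (X ^ 2 + 1 : Polynomial ℚ).natDegree ≤ i * 2 := Nat.mul_le_mul_left i this
                  _ = 2 * i := by ring
          · exact le_of_eq (Polynomial.natDegree_X_pow _)
      _ ≤ 2 * d := by omega
  have hRdeg : R.natDegree = 2 * d :=
    le_antisymm hRdegle (Polynomial.le_natDegree_of_ne_zero (by rw [hcoeffR]; exact one_ne_zero))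
  have hRmonic : R.Monic := by
    have : R.leadingCoeff = 1 := by rw [Polynomial.leadingCoeff, hRdeg, hcoeffR]
    exact this
  have hR0 : R ≠ 0 := hRmonic.ne_zero
  have hΦdvd : minpoly ℚ ζ ∣ R := minpoly.dvd ℚ ζ haevalR
  have hΦeq : minpoly ℚ ζ = Polynomial.cyclotomic r ℚ := (Polynomial.cyclotomic_eq_minpoly_rat hζ hrpos).symm
  have hΦdeg : (minpoly ℚ ζ).natDegree = r - 1 := by
    rw [hΦeq, Polynomial.natDegree_cyclotomic, Nat.totient_prime hr]
  have hle1 : r - 1 ≤ 2 * d := by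
    rw [← hΦdeg, ← hRdeg]
    exact Polynomial.natDegree_le_of_dvd hΦdvd hR0
  -- the complex roots of χ
  set ι : ℚ →+* ℂ := algebraMap ℚ ℂ with hιdef
  set χC := χ.map ι with hχCdef
  have hsplits : Polynomial.Splits χC := IsAlgClosed.splits χC
  have hsep : χ.Separable := (minpoly.irreducible hθint).separable
  have hnodup : χC.roots.Nodup := Polynomial.nodup_roots hsep.map
  have hχC0 : χC ≠ 0 := (hχmonic.map ι).ne_zero
  have hcard : Multiset.card χC.roots = d := by
    rw [← hsplits.natDegree_eq_card_roots, hχCdef, Polynomial.natDegree_map]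
  set T := (primitiveRoots r ℂ).image (fun w => w + w⁻¹) with hTdef
  have hsub : χC.roots.toFinset ⊆ T := by
    intro c hc
    have hc' : Polynomial.aeval c χ = 0 := by
      rw [Multiset.mem_toFinset] at hc
      have h2 := ((Polynomial.mem_roots').mp hc).2
      rw [Polynomial.IsRoot, hχCdef, Polynomial.eval_map, ← Polynomial.aeval_def] at h2
      exact h2
    set pb := IntermediateField.adjoin.powerBasis hθint with hpbdef
    have hpbgen : pb.gen = IntermediateField.AdjoinSimple.gen ℚ θ :=
      IntermediateField.adjoin.powerBasis_gen hθint
    have hgen : Polynomial.aeval c (minpoly ℚ pb.gen) = 0 := by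
      rw [hpbgen]
      exact (congrArg (Polynomial.aeval c) (IntermediateField.minpoly_gen (F := ℚ) θ)).trans hc'
    set τ : ℚ⟮θ⟯ →ₐ[ℚ] ℂ := pb.lift c hgen with hτdef
    letI : Algebra ℚ⟮θ⟯ ℂ := τ.toRingHom.toAlgebra
    haveI : IsScalarTower ℚ ℚ⟮θ⟯ ℂ := IsScalarTower.of_algebraMap_eq (fun q => (τ.commutes q).symm)
    set σ : L →ₐ[ℚ⟮θ⟯] ℂ := IsAlgClosed.lift with hσdef
    have hw : IsPrimitiveRoot (σ ζ) r := hζ.map_of_injective σ.toRingHom.injective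
    have hσθ : σ θ = c := by
      have h1 : σ (algebraMap ℚ⟮θ⟯ L pb.gen) = algebraMap ℚ⟮θ⟯ ℂ pb.gen := σ.commutes pb.gen
      have h2 : algebraMap ℚ⟮θ⟯ ℂ pb.gen = τ pb.gen := rfl
      have h3 : τ pb.gen = c := pb.lift_gen c hgen
      rw [h2, h3] at h1
      rw [hpbgen, IntermediateField.AdjoinSimple.algebraMap_gen] at h1
      exact h1
    rw [hTdef]
    apply Finset.mem_image.mpr
    refine ⟨σ ζ, (mem_primitiveRoots hrpos).mpr hw, ?_⟩
    rw [← hσθ]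
    show σ ζ + (σ ζ)⁻¹ = σ (ζ + ζ⁻¹)
    rw [map_add, map_inv₀]
  have hTcard : 2 * T.card ≤ r - 1 := by
    have hcardP : (primitiveRoots r ℂ).card = r - 1 := by
      rw [Complex.card_primitiveRoots, Nat.totient_prime hr]
    have hmaps : ∀ w ∈ primitiveRoots r ℂ, w + w⁻¹ ∈ T := fun w hw =>
      Finset.mem_image_of_mem _ hw
    have hsum := Finset.card_eq_sum_card_fiberwise hmaps
    have hfib : ∀ b ∈ T, 2 ≤ ((primitiveRoots r ℂ).filter (fun w => w + w⁻¹ = b)).card := by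
      intro b hb
      obtain ⟨w, hw, hwb⟩ := Finset.mem_image.mp hb
      have hwprim : IsPrimitiveRoot w r := (mem_primitiveRoots hrpos).mp hw
      have hw0 : w ≠ 0 := hwprim.ne_zero (by omega)
      have hwinv : w⁻¹ ∈ primitiveRoots r ℂ := (mem_primitiveRoots hrpos).mpr hwprim.inv
      have hne : w ≠ w⁻¹ := by
        intro h
        have h2 : w ^ 2 = 1 := by
          rw [sq]
          nth_rewrite 2 [h]
          exact mul_inv_cancel₀ hw0
        have hdvd := hwprim.dvd_of_pow_eq_one 2 h2
        exact absurd (Nat.le_of_dvd (by omega) hdvd) (by omega)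
      have hsubs : ({w, w⁻¹} : Finset ℂ) ⊆
          (primitiveRoots r ℂ).filter (fun z => z + z⁻¹ = b) := by
        intro z hz
        rcases Finset.mem_insert.mp hz with h | h
        · subst h
          exact Finset.mem_filter.mpr ⟨hw, hwb⟩
        · rw [Finset.mem_singleton] at h
          subst h
          refine Finset.mem_filter.mpr ⟨hwinv, ?_⟩
          rw [inv_inv, add_comm]
          exact hwb
      calc 2 = ({w, w⁻¹} : Finset ℂ).card := (Finset.card_pair hne).symm
        _ ≤ _ := Finset.card_le_card hsubs
    calc 2 * T.card = ∑ _b ∈ T, 2 := by rw [Finset.sum_const, smul_eq_mul, mul_comm]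
      _ ≤ ∑ b ∈ T, ((primitiveRoots r ℂ).filter (fun w => w + w⁻¹ = b)).card :=
          Finset.sum_le_sum hfib
      _ = (primitiveRoots r ℂ).card := hsum.symm
      _ = r - 1 := hcardP
  have hdT : d ≤ T.card := by
    calc d = χC.roots.toFinset.card := by
          rw [Multiset.toFinset_card_of_nodup hnodup, hcard]
      _ ≤ T.card := Finset.card_le_card hsub
  have h2d : 2 * d = r - 1 := le_antisymm (le_trans (by omega) hTcard) hle1
  -- R equals the cyclotomic polynomial
  obtain ⟨q, hq⟩ := hΦdvd
  have hΦmonic : (minpoly ℚ ζ).Monic := minpoly.monic (IsIntegral.of_finite ℚ ζ)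
  have hq0 : q ≠ 0 := by
    rintro rfl
    rw [mul_zero] at hq
    exact hR0 hq
  have hqdeg : q.natDegree = 0 := by
    have hdm : R.natDegree = (minpoly ℚ ζ).natDegree + q.natDegree := by
      rw [hq, Polynomial.natDegree_mul hΦmonic.ne_zero hq0]
    rw [hRdeg, h2d, hΦdeg] at hdm
    omega
  have hq1 : q = 1 := by
    have hqc : q = C (q.coeff 0) := Polynomial.eq_C_of_natDegree_eq_zero hqdeg
    have hlc : (1 : ℚ) = q.coeff 0 := by
      have h1 : R.leadingCoeff = 1 := hRmonic
      rw [hq, Polynomial.leadingCoeff_mul, hΦmonic.leadingCoeff, one_mul, hqc,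
        Polynomial.leadingCoeff_C] at h1
      exact h1.symm
    rw [hqc, ← hlc, map_one]
  have hReq : R = Polynomial.cyclotomic r ℚ := by
    rw [hq, hq1, mul_one, hΦeq]
  -- evaluations
  haveI : Fact r.Prime := ⟨hr⟩
  have hevalRc : R.eval 1 = (r : ℚ) := by
    rw [hReq]
    exact_mod_cast Polynomial.eval_one_cyclotomic_prime
  have hevalR : R.eval 1 = χ.eval 2 := by
    rw [hRdef, Polynomial.eval_finset_sum]
    rw [Polynomial.eval_eq_sum_range' (by omega : χ.natDegree < d + 1)]
    apply Finset.sum_congr rfl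
    intro i hi
    simp only [Polynomial.eval_mul, Polynomial.eval_pow, Polynomial.eval_C, Polynomial.eval_X,
      Polynomial.eval_add, Polynomial.eval_one, one_pow, mul_one]
    norm_num
  have hχ2 : χ.eval 2 = (r : ℚ) := by rw [← hevalR, hevalRc]
  -- compute the norm as a product over embeddings
  haveI : FiniteDimensional ℚ ℚ⟮θ⟯ := IntermediateField.adjoin.finiteDimensional hθint
  have hnorm := Algebra.norm_eq_prod_embeddings ℚ ℂ ((2 : ℚ⟮θ⟯) - AdjoinSimple.gen ℚ θ)
  set pb := IntermediateField.adjoin.powerBasis hθint with hpbdef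
  have hpbgen : pb.gen = IntermediateField.AdjoinSimple.gen ℚ θ :=
    IntermediateField.adjoin.powerBasis_gen hθint
  set g : (ℚ⟮θ⟯ →ₐ[ℚ] ℂ) → ℂ := fun σ => σ (AdjoinSimple.gen ℚ θ) with hgdef
  have hginj : Function.Injective g := by
    intro σ₁ σ₂ h
    apply pb.algHom_ext
    rw [hpbgen]
    exact h
  have himg_sub : Finset.univ.image g ⊆ χC.roots.toFinset := by
    intro c hc
    obtain ⟨σ, _, rfl⟩ := Finset.mem_image.mp hc
    apply Multiset.mem_toFinset.mpr
    apply (Polynomial.mem_roots hχC0).mpr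
    have : Polynomial.aeval (g σ) χ = 0 := by
      rw [hgdef]
      have := Polynomial.aeval_algHom_apply σ (AdjoinSimple.gen ℚ θ) χ
      rw [this, hχdef]
      exact (congrArg σ (IntermediateField.aeval_gen_minpoly (F := ℚ) θ)).trans (map_zero σ)
    rw [Polynomial.IsRoot, hχCdef, Polynomial.eval_map, ← Polynomial.aeval_def]
    exact this
  have hcardHom : Fintype.card (ℚ⟮θ⟯ →ₐ[ℚ] ℂ) = d := by
    rw [AlgHom.card, IntermediateField.adjoin.finrank hθint]
  have himg_eq : Finset.univ.image g = χC.roots.toFinset := by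
    apply Finset.eq_of_subset_of_card_le himg_sub
    rw [Finset.card_image_of_injective _ hginj, Finset.card_univ, hcardHom,
      Multiset.toFinset_card_of_nodup hnodup, hcard]
  have hsplitsC : Polynomial.Splits χC :=
    hsplits
  have hprodroots : χC.eval 2 = (χC.roots.map (fun a => 2 - a)).prod := by
    conv_lhs => rw [hχCdef, (show Polynomial.Splits (χ.map ι) from hsplitsC).eq_prod_roots_of_monic
      (hχmonic.map ι)]
    rw [← hχCdef]
    rw [Polynomial.eval_multiset_prod, Multiset.map_map]
    congr 1
    apply Multiset.map_congr rfl
    intro a _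
    simp
  have hfinprod : χC.roots.toFinset.prod (fun c => 2 - c) = (χC.roots.map (fun a => 2 - a)).prod := by
    rw [Finset.prod, Multiset.toFinset_val, Multiset.dedup_eq_self.mpr hnodup]
  have hprod : (∏ σ : (ℚ⟮θ⟯ →ₐ[ℚ] ℂ), (2 - g σ)) = χC.eval 2 := by
    rw [hprodroots, ← hfinprod, ← himg_eq,
      Finset.prod_image (fun a _ b _ h => hginj h)]
  -- putting it together
  have hev2 : χC.eval 2 = ι (χ.eval 2) := by
    have h1 : χC.eval (ι 2) = ι (χ.eval 2) := by
      rw [hχCdef, Polynomial.eval_map, Polynomial.eval₂_at_apply]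
    rw [← h1, map_ofNat]
  have hfinal : ι (Algebra.norm ℚ ((2 : ℚ⟮θ⟯) - AdjoinSimple.gen ℚ θ)) = ι (r : ℚ) := by
    rw [hnorm]
    have : (∏ σ : (ℚ⟮θ⟯ →ₐ[ℚ] ℂ), σ ((2 : ℚ⟮θ⟯) - AdjoinSimple.gen ℚ θ)) =
        ∏ σ : (ℚ⟮θ⟯ →ₐ[ℚ] ℂ), (2 - g σ) := by
      apply Finset.prod_congr rfl
      intro σ _
      rw [map_sub, hgdef, map_ofNat]
    rw [this, hprod, hev2, hχ2]
  exact ι.injective hfinal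

/-- for coprime integers x, y and 0 ≤ k < j ≤ (r−1)/2, any prime ideal π of O_K
dividing both f_k·O_K and f_j·O_K equals β. -/
theorem stmt_3 (r : ℕ) (hr : r.Prime) (hr5 : 5 < r)
    (L : Type) [Field L] [NumberField L] (ζ : L) (hζ : IsPrimitiveRoot ζ r)
    (K : IntermediateField ℚ L) (hK : K = ℚ⟮ζ + ζ⁻¹⟯) [NumberField K]
    (α : ℕ → 𝓞 K) (hα : ∀ j, ((α j : K) : L) = ζ ^ j + ζ⁻¹ ^ j)
    (β : Ideal (𝓞 K)) (hβ : β = Ideal.span {(2 : 𝓞 K) - α 1})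
    (x y : ℤ) (hxy : Int.gcd x y = 1)
    (f : ℕ → 𝓞 K)
    (hf : ∀ j, f j = (x : 𝓞 K) ^ 2 + α j * (x : 𝓞 K) * (y : 𝓞 K) + (y : 𝓞 K) ^ 2)
    (k j : ℕ) (hkj : k < j) (hj : j ≤ (r - 1) / 2) :
    ∀ π : Ideal (𝓞 K), π.IsPrime →
      π ∣ Ideal.span {f k} → π ∣ Ideal.span {f j} → π = β := by
  subst hK
  intro π hπ hπk hπj
  have hr1 : 1 < r := by omega
  have hrodd : r % 2 = 1 := Nat.odd_iff.mp (hr.odd_of_ne_two (by omega))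
  have hζ0 : ζ ≠ 0 := hζ.ne_zero (by omega)
  -- the embedding of 𝓞 ℚ⟮ζ + ζ⁻¹⟯ into L
  set emb : 𝓞 ℚ⟮ζ + ζ⁻¹⟯ →+* L := (algebraMap ℚ⟮ζ + ζ⁻¹⟯ L).comp (algebraMap (𝓞 ℚ⟮ζ + ζ⁻¹⟯) ℚ⟮ζ + ζ⁻¹⟯) with hembdef
  have hembInj : Function.Injective emb :=
    (algebraMap ℚ⟮ζ + ζ⁻¹⟯ L).injective.comp RingOfIntegers.coe_injective
  have hembα : ∀ i, emb (α i) = ζ ^ i + ζ⁻¹ ^ i := by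
    intro i
    rw [hembdef, RingHom.comp_apply, ← RingOfIntegers.coe_eq_algebraMap]
    exact hα i
  have hemb2 : emb 2 = 2 := by rw [map_ofNat]
  -- α 0 = 2
  have hα0 : α 0 = 2 := by
    apply hembInj
    rw [hembα 0, hemb2, pow_zero, pow_zero]
    norm_num
  -- product identity
  have hmul : ∀ a b : ℕ, b ≤ a → α a * α b = α (a + b) + α (a - b) := by
    intro a b hba
    obtain ⟨c, rfl⟩ := Nat.exists_eq_add_of_le hba
    apply hembInj
    rw [map_mul, map_add, hembα, hembα, hembα, hembα]
    have hbc : b + c - b = c := by omega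
    rw [hbc]
    have h1 : ζ ^ b * ζ⁻¹ ^ b = 1 := by
      rw [← mul_pow, mul_inv_cancel₀ hζ0, one_pow]
    linear_combination (ζ ^ c + ζ⁻¹ ^ c) * h1
  -- periodicity
  have hαmod : ∀ a b : ℕ, a % r = b % r → α a = α b := by
    have key : ∀ a : ℕ, α a = α (a % r) := by
      intro a
      apply hembInj
      rw [hembα, hembα]
      have hz : ζ ^ a = ζ ^ (a % r) := by
        conv_lhs => rw [← Nat.div_add_mod a r]
        rw [pow_add, pow_mul, hζ.pow_eq_one, one_pow, one_mul]
      have hzi : ζ⁻¹ ^ a = ζ⁻¹ ^ (a % r) := by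
        conv_lhs => rw [← Nat.div_add_mod a r]
        rw [pow_add, pow_mul, inv_pow, hζ.pow_eq_one, inv_one, one_pow, one_mul]
      rw [hz, hzi]
    intro a b hab
    rw [key a, key b, hab]
  -- divisibility along multiples
  have hdvd2 : ∀ m t : ℕ, ((2 : 𝓞 ℚ⟮ζ + ζ⁻¹⟯) - α m) ∣ (2 - α (m * t)) := by
    intro m t
    have key : ∀ t : ℕ, (((2 : 𝓞 ℚ⟮ζ + ζ⁻¹⟯) - α m) ∣ (2 - α (m * t))) ∧
        (((2 : 𝓞 ℚ⟮ζ + ζ⁻¹⟯) - α m) ∣ (2 - α (m * (t + 1)))) := by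
      intro t
      induction t with
      | zero =>
        constructor
        · rw [Nat.mul_zero, hα0, sub_self]
          exact dvd_zero _
        · rw [Nat.zero_add, Nat.mul_one]
      | succ t ih =>
        refine ⟨ih.2, ?_⟩
        have hle : m ≤ m * (t + 1) := Nat.le_mul_of_pos_right m (by omega)
        have hid := hmul (m * (t + 1)) m hle
        have e1 : m * (t + 1) + m = m * (t + 1 + 1) := by ring
        have e2 : m * (t + 1) - m = m * t := by
          rw [Nat.mul_succ, Nat.add_sub_cancel]
        rw [e1, e2] at hid
        have hval : (2 : 𝓞 ℚ⟮ζ + ζ⁻¹⟯) - α (m * (t + 1 + 1)) =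
            ((2 : 𝓞 ℚ⟮ζ + ζ⁻¹⟯) - α m) * 2 + ((2 : 𝓞 ℚ⟮ζ + ζ⁻¹⟯) - α (m * (t + 1))) * 2 -
            ((2 : 𝓞 ℚ⟮ζ + ζ⁻¹⟯) - α m) * ((2 : 𝓞 ℚ⟮ζ + ζ⁻¹⟯) - α (m * (t + 1))) - ((2 : 𝓞 ℚ⟮ζ + ζ⁻¹⟯) - α (m * t)) := by
          linear_combination hid
        rw [hval]
        exact dvd_sub (dvd_sub (dvd_add (dvd_mul_right _ _) (ih.2.mul_right 2))
          (dvd_mul_right _ _)) ih.1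
    exact (key t).1
  -- every 2 - α m with m coprime to r divides 2 - α 1
  have hdvd1 : ∀ m : ℕ, 0 < m → m < r → ((2 : 𝓞 ℚ⟮ζ + ζ⁻¹⟯) - α m) ∣ (2 - α 1) := by
    intro m hm0 hmr
    have hcop : Nat.Coprime m r :=
      Nat.Coprime.symm (hr.coprime_iff_not_dvd.mpr
        (fun h => by have := Nat.le_of_dvd hm0 h; omega))
    obtain ⟨t, -, ht⟩ := Nat.exists_mul_mod_eq_one_of_coprime hcop hr1
    have := hdvd2 m t
    rwa [hαmod (m * t) 1 (by rw [ht, Nat.mod_eq_of_lt hr1])] at this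
  -- memberships
  have hfk : f k ∈ π := Ideal.dvd_span_singleton.mp hπk
  have hfj : f j ∈ π := Ideal.dvd_span_singleton.mp hπj
  have hone : (1 : 𝓞 ℚ⟮ζ + ζ⁻¹⟯) ∉ π := (Ideal.ne_top_iff_one π).mp hπ.ne_top
  have hcpr : IsCoprime (x : 𝓞 ℚ⟮ζ + ζ⁻¹⟯) (y : 𝓞 ℚ⟮ζ + ζ⁻¹⟯) := by
    have h := (Int.isCoprime_iff_gcd_eq_one.mpr hxy).map (Int.castRingHom (𝓞 ℚ⟮ζ + ζ⁻¹⟯))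
    simpa using h
  have hxy_mem : ∀ z : 𝓞 ℚ⟮ζ + ζ⁻¹⟯, z ∈ π → ¬ ((x : 𝓞 ℚ⟮ζ + ζ⁻¹⟯) ∈ π ∧ z = z) → True := fun _ _ _ => trivial
  have hxπ : (x : 𝓞 ℚ⟮ζ + ζ⁻¹⟯) ∉ π := by
    intro hx
    have hy2 : (y : 𝓞 ℚ⟮ζ + ζ⁻¹⟯) * (y : 𝓞 ℚ⟮ζ + ζ⁻¹⟯) ∈ π := by
      have : (y : 𝓞 ℚ⟮ζ + ζ⁻¹⟯) * (y : 𝓞 ℚ⟮ζ + ζ⁻¹⟯) =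
          f k - ((x : 𝓞 ℚ⟮ζ + ζ⁻¹⟯) * (x : 𝓞 ℚ⟮ζ + ζ⁻¹⟯) + α k * (x : 𝓞 ℚ⟮ζ + ζ⁻¹⟯) * (y : 𝓞 ℚ⟮ζ + ζ⁻¹⟯)) := by
        rw [hf k]; ring
      rw [this]
      exact Ideal.sub_mem π hfk (Ideal.add_mem π (Ideal.mul_mem_left π _ hx)
        (Ideal.mul_mem_right _ π (Ideal.mul_mem_left π _ hx)))
    have hy : (y : 𝓞 ℚ⟮ζ + ζ⁻¹⟯) ∈ π := (hπ.mem_or_mem hy2).elim id id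
    obtain ⟨a, b, hab⟩ := hcpr
    exact hone (hab ▸ Ideal.add_mem π (Ideal.mul_mem_left π _ hx) (Ideal.mul_mem_left π _ hy))
  have hyπ : (y : 𝓞 ℚ⟮ζ + ζ⁻¹⟯) ∉ π := by
    intro hy
    have hx2 : (x : 𝓞 ℚ⟮ζ + ζ⁻¹⟯) * (x : 𝓞 ℚ⟮ζ + ζ⁻¹⟯) ∈ π := by
      have : (x : 𝓞 ℚ⟮ζ + ζ⁻¹⟯) * (x : 𝓞 ℚ⟮ζ + ζ⁻¹⟯) =
          f k - (α k * (x : 𝓞 ℚ⟮ζ + ζ⁻¹⟯) * (y : 𝓞 ℚ⟮ζ + ζ⁻¹⟯) + (y : 𝓞 ℚ⟮ζ + ζ⁻¹⟯) * (y : 𝓞 ℚ⟮ζ + ζ⁻¹⟯)) := by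
        rw [hf k]; ring
      rw [this]
      exact Ideal.sub_mem π hfk (Ideal.add_mem π (Ideal.mul_mem_left π _ hy)
        (Ideal.mul_mem_left π _ hy))
    have hx : (x : 𝓞 ℚ⟮ζ + ζ⁻¹⟯) ∈ π := (hπ.mem_or_mem hx2).elim id id
    obtain ⟨a, b, hab⟩ := hcpr
    exact hone (hab ▸ Ideal.add_mem π (Ideal.mul_mem_left π _ hx) (Ideal.mul_mem_left π _ hy))
  -- α k - α j ∈ π
  have hαkj : α k - α j ∈ π := by
    have hmem : (α k - α j) * ((x : 𝓞 ℚ⟮ζ + ζ⁻¹⟯) * (y : 𝓞 ℚ⟮ζ + ζ⁻¹⟯)) ∈ π := by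
      have : (α k - α j) * ((x : 𝓞 ℚ⟮ζ + ζ⁻¹⟯) * (y : 𝓞 ℚ⟮ζ + ζ⁻¹⟯)) = f k - f j := by
        rw [hf k, hf j]; ring
      rw [this]
      exact Ideal.sub_mem π hfk hfj
    rcases hπ.mem_or_mem hmem with h | h
    · exact h
    · rcases hπ.mem_or_mem h with h | h
      · exact absurd h hxπ
      · exact absurd h hyπ
  -- square identity
  have hkle : k ≤ j := le_of_lt hkj
  have h1 := hmul k k le_rfl
  have h2 := hmul j j le_rfl
  simp only [Nat.sub_self] at h1 h2
  have h3 := hmul j k hkle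
  have h4 := hmul (j + k) (j - k) (by omega)
  have eA : j + k + (j - k) = j + j := by omega
  have eB : j + k - (j - k) = k + k := by omega
  rw [eA, eB] at h4
  have hsq : (α k - α j) ^ 2 = ((2 : 𝓞 ℚ⟮ζ + ζ⁻¹⟯) - α (j - k)) * ((2 : 𝓞 ℚ⟮ζ + ζ⁻¹⟯) - α (j + k)) := by
    linear_combination h1 + h2 - 2 * h3 - h4 + 2 * hα0
  -- get 2 - α m ∈ π for suitable m
  have hsqmem : ((2 : 𝓞 ℚ⟮ζ + ζ⁻¹⟯) - α (j - k)) * ((2 : 𝓞 ℚ⟮ζ + ζ⁻¹⟯) - α (j + k)) ∈ π := by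
    rw [← hsq, sq]
    exact Ideal.mul_mem_left π _ hαkj
  have h2α1 : (2 : 𝓞 ℚ⟮ζ + ζ⁻¹⟯) - α 1 ∈ π := by
    have hhalf : 2 * ((r - 1) / 2) = r - 1 := by omega
    rcases hπ.mem_or_mem hsqmem with h | h
    · obtain ⟨c, hc⟩ := hdvd1 (j - k) (by omega) (by omega)
      rw [hc]
      exact Ideal.mul_mem_right _ π h
    · obtain ⟨c, hc⟩ := hdvd1 (j + k) (by omega) (by omega)
      rw [hc]
      exact Ideal.mul_mem_right _ π h
  have hπβ : π ∣ β := by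
    rw [hβ]
    exact Ideal.dvd_span_singleton.mpr h2α1
  -- norm computation
  have hαgen : algebraMap (𝓞 ℚ⟮ζ + ζ⁻¹⟯) ℚ⟮ζ + ζ⁻¹⟯ (α 1) = AdjoinSimple.gen ℚ (ζ + ζ⁻¹) := by
    apply (algebraMap ℚ⟮ζ + ζ⁻¹⟯ L).injective
    rw [IntermediateField.AdjoinSimple.algebraMap_gen]
    have h1 : algebraMap ℚ⟮ζ + ζ⁻¹⟯ L (algebraMap (𝓞 ℚ⟮ζ + ζ⁻¹⟯) ℚ⟮ζ + ζ⁻¹⟯ (α 1)) = emb (α 1) :=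
      rfl
    rw [h1, hembα 1, pow_one, pow_one]
  have hnormβ : Ideal.absNorm β = r := by
    rw [hβ, Ideal.absNorm_span_singleton]
    have hnq : Algebra.norm ℚ (((2 : 𝓞 ℚ⟮ζ + ζ⁻¹⟯) - α 1 : 𝓞 ℚ⟮ζ + ζ⁻¹⟯) : ℚ⟮ζ + ζ⁻¹⟯) = (r : ℚ) := by
      rw [RingOfIntegers.coe_eq_algebraMap, map_sub, hαgen, map_ofNat]
      exact norm_two_sub_gen hr hr5 hζ
    have hint : ((Algebra.norm ℤ ((2 : 𝓞 ℚ⟮ζ + ζ⁻¹⟯) - α 1) : ℤ) : ℚ) = ((r : ℤ) : ℚ) := by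
      rw [Algebra.coe_norm_int, hnq]
      norm_num
    have hZ : Algebra.norm ℤ ((2 : 𝓞 ℚ⟮ζ + ζ⁻¹⟯) - α 1) = (r : ℤ) := by
      exact_mod_cast hint
    rw [hZ, Int.natAbs_natCast]
  -- conclude
  obtain ⟨c, hc⟩ := hπβ
  have habs : Ideal.absNorm π * Ideal.absNorm c = r := by
    rw [← map_mul, ← hc, hnormβ]
  have hπne1 : Ideal.absNorm π ≠ 1 := fun h => hπ.ne_top (Ideal.absNorm_eq_one_iff.mp h)
  have hπdvd : Ideal.absNorm π ∣ r := ⟨_, habs.symm⟩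
  rcases (Nat.Prime.eq_one_or_self_of_dvd hr _ hπdvd) with h | h
  · exact absurd h hπne1
  · have hc1 : Ideal.absNorm c = 1 := by
      have h2 := habs
      rw [h] at h2
      exact (Nat.mul_eq_left (by omega)).mp h2
    rw [hc, Ideal.absNorm_eq_one_iff.mp hc1, Ideal.mul_top]
end

section
/- Let D be a nonzero integer with gcd(D, r) = 1, let p be a prime with p ≠ r, and let (x, y, z) be integers with gcd(x, y, z) = 1, xyz ≠ 0, x^r + y^r = D·z^p, and k := v_r(z) > 0. Set A = (α_1 − α_2)(x + y)², B = (α_2 − 2)·f_1, C = (2 − α_1)·f_2. Then v_β(B·O_K) = v_β(C·O_K) = 2 and v_β(A·O_K) = (p·k − 1)(r − 1) + 1. -/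
set_option linter.unusedSectionVars false
set_option linter.unusedVariables false
set_option maxHeartbeats 1600000
set_option synthInstance.maxHeartbeats 400000

open NumberField IntermediateField IsDedekindDomain Multiplicative

section AuxU

variable {L : Type} [Field L]

/-- An "integral unit" of `L`: an algebraic integer with algebraic-integer inverse. -/
def IsU (L : Type) [Field L] (c : L) : Prop :=
  IsIntegral ℤ c ∧ ∃ d : L, IsIntegral ℤ d ∧ c * d = 1

lemma IsU.mul {c d : L} (hc : IsU L c) (hd : IsU L d) : IsU L (c * d) := by
  obtain ⟨hc1, c', hc2, hc3⟩ := hc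
  obtain ⟨hd1, d', hd2, hd3⟩ := hd
  refine ⟨hc1.mul hd1, c' * d', hc2.mul hd2, ?_⟩
  calc c * d * (c' * d') = (c * c') * (d * d') := by ring
  _ = 1 := by rw [hc3, hd3, one_mul]

lemma IsU.one' : IsU L 1 := ⟨isIntegral_one, 1, isIntegral_one, one_mul 1⟩

lemma IsU.pow {c : L} (hc : IsU L c) (n : ℕ) : IsU L (c ^ n) := by
  induction n with
  | zero => simpa using IsU.one'
  | succ n ih => rw [pow_succ]; exact ih.mul hc

end AuxU

section AuxDvd

variable {L : Type} [Field L] [NumberField L] {K : IntermediateField ℚ L} [NumberField K]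

lemma dvd_of_L {a b : 𝓞 K} {c : L} (hc : IsIntegral ℤ c)
    (h : algebraMap (𝓞 K) L b = algebraMap (𝓞 K) L a * c) : a ∣ b := by
  have hinj : Function.Injective (algebraMap (𝓞 K) L) := by
    rw [IsScalarTower.algebraMap_eq (𝓞 K) K L]
    exact (algebraMap K L).injective.comp RingOfIntegers.coe_injective
  by_cases ha : a = 0
  · subst ha
    rw [map_zero, zero_mul] at h
    have : b = 0 := hinj (by rw [h, map_zero])
    simp [this]
  · have haL : algebraMap (𝓞 K) L a ≠ 0 := fun h0 => ha (hinj (by rw [h0, map_zero]))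
    have haK : algebraMap (𝓞 K) K a ≠ 0 := fun h0 =>
      ha (RingOfIntegers.coe_injective (by rw [h0, map_zero]))
    set d : K := algebraMap (𝓞 K) K b / algebraMap (𝓞 K) K a with hd
    have hmap : algebraMap K L d = c := by
      rw [hd, map_div₀, ← IsScalarTower.algebraMap_apply, ← IsScalarTower.algebraMap_apply, h]
      field_simp
    have hdint : IsIntegral ℤ d :=
      (isIntegral_algebraMap_iff (algebraMap K L).injective).mp (hmap ▸ hc)
    refine ⟨⟨d, hdint⟩, ?_⟩
    apply RingOfIntegers.coe_injective
    show algebraMap (𝓞 K) K b = algebraMap (𝓞 K) K a * d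
    rw [hd]
    field_simp

lemma assoc_of_isU {a b : 𝓞 K} {c : L} (hc : IsU L c)
    (h : algebraMap (𝓞 K) L b = algebraMap (𝓞 K) L a * c) : Associated a b := by
  obtain ⟨hc1, d, hd1, hcd⟩ := hc
  exact associated_of_dvd_dvd (dvd_of_L hc1 h)
    (dvd_of_L hd1 (by rw [h, mul_assoc, hcd, mul_one]))

lemma int_dvd_of_dvd {a b : ℤ} (h : (a : 𝓞 K) ∣ (b : 𝓞 K)) : a ∣ b := by
  by_cases ha : a = 0
  · subst ha
    obtain ⟨c, hc⟩ := h
    rw [Int.cast_zero, zero_mul] at hc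
    have hb : b = 0 := by exact_mod_cast hc
    simp [hb]
  · obtain ⟨c, hc⟩ := h
    have h2 : (b : K) = (a : K) * (c : K) := by
      have := congrArg (algebraMap (𝓞 K) K) hc
      rw [map_mul, map_intCast] at this
      exact_mod_cast this
    have haQ : (a : ℚ) ≠ 0 := Int.cast_ne_zero.mpr ha
    have haK : (a : K) ≠ 0 := Int.cast_ne_zero.mpr ha
    set q : ℚ := (b : ℚ) / (a : ℚ) with hq
    have hqK : algebraMap ℚ K q = (c : K) := by
      rw [hq, map_div₀, map_intCast, map_intCast, h2]
      field_simp
    have hqint : IsIntegral ℤ q :=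
      (isIntegral_algebraMap_iff (algebraMap ℚ K).injective).mp
        (hqK ▸ RingOfIntegers.isIntegral_coe c)
    obtain ⟨n, hn⟩ := IsIntegrallyClosed.isIntegral_iff.mp hqint
    refine ⟨n, ?_⟩
    have hb : (b : ℚ) = (a : ℚ) * (n : ℚ) := by
      have hn' : (n : ℚ) = q := by exact_mod_cast hn
      rw [hn', hq]
      field_simp
    exact_mod_cast hb

end AuxDvd

section AuxRoots

variable {L : Type} [Field L]

lemma geom_step {r : ℕ} [NeZero r] {η₁ η₂ : L} (h1 : IsPrimitiveRoot η₁ r)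
    (hi1 : IsIntegral ℤ η₁) (h2 : η₂ ^ r = 1) :
    ∃ u : L, IsIntegral ℤ u ∧ 1 - η₂ = (1 - η₁) * u := by
  obtain ⟨s, -, hs⟩ := h1.eq_pow_of_pow_eq_one h2
  refine ⟨∑ w ∈ Finset.range s, η₁ ^ w, ?_, ?_⟩
  · exact Subalgebra.sum_mem (integralClosure ℤ L)
      (fun w _ => Subalgebra.pow_mem _ hi1 w)
  · have hg := geom_sum_mul η₁ s
    rw [← hs]
    linear_combination hg

lemma isU_ratio {r : ℕ} [NeZero r] (hr1 : 1 < r) {η₁ η₂ : L}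
    (h1 : IsPrimitiveRoot η₁ r) (h2 : IsPrimitiveRoot η₂ r)
    (hi1 : IsIntegral ℤ η₁) (hi2 : IsIntegral ℤ η₂) :
    ∃ u : L, IsU L u ∧ 1 - η₂ = (1 - η₁) * u := by
  obtain ⟨u, hu, h12⟩ := geom_step h1 hi1 h2.pow_eq_one
  obtain ⟨v, hv, h21⟩ := geom_step h2 hi2 h1.pow_eq_one
  have hne : (1 : L) - η₁ ≠ 0 := sub_ne_zero.mpr (h1.ne_one hr1).symm
  have huv : u * v = 1 := by
    apply mul_left_cancel₀ hne
    calc (1 - η₁) * (u * v) = ((1 - η₁) * u) * v := by ring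
    _ = (1 - η₂) * v := by rw [← h12]
    _ = 1 - η₁ := by rw [← h21]
    _ = (1 - η₁) * 1 := by ring
  exact ⟨u, ⟨hu, v, hv, huv⟩, h12⟩

lemma prod_one_sub_nthRoots [IsDomain L] [DecidableEq L] {r : ℕ} (hr : 1 < r) {ζ : L}
    (hζ : IsPrimitiveRoot ζ r) :
    ∏ η ∈ (Polynomial.nthRootsFinset r (1 : L)).erase 1, (1 - η) = (r : L) := by
  classical
  have hpos : 0 < r := by omega
  have hpoly := Polynomial.X_pow_sub_one_eq_prod hpos hζ
  have h1mem : (1 : L) ∈ Polynomial.nthRootsFinset r (1 : L) :=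
    Polynomial.one_mem_nthRootsFinset hpos
  rw [← Finset.mul_prod_erase _ _ h1mem] at hpoly
  have hgeom : (∑ i ∈ Finset.range r, (Polynomial.X : Polynomial L) ^ i) *
      (Polynomial.X - 1) = Polynomial.X ^ r - 1 := geom_sum_mul _ _
  have hX1 : (Polynomial.X - Polynomial.C (1 : L)) ≠ 0 := Polynomial.X_sub_C_ne_zero 1
  have hcancel : ∏ η ∈ (Polynomial.nthRootsFinset r (1 : L)).erase 1,
      (Polynomial.X - Polynomial.C η) =
      ∑ i ∈ Finset.range r, (Polynomial.X : Polynomial L) ^ i := by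
    apply mul_left_cancel₀ hX1
    rw [← hpoly, ← hgeom, Polynomial.C_1]
    ring
  have := congrArg (Polynomial.eval 1) hcancel
  simpa [Polynomial.eval_prod, Polynomial.eval_finset_sum] using this

lemma exists_isU_prod {ι : Type*} (s : Finset ι) (g : ι → L) (a : L)
    (h : ∀ i ∈ s, ∃ u, IsU L u ∧ g i = a * u) :
    ∃ U, IsU L U ∧ ∏ i ∈ s, g i = a ^ s.card * U := by
  classical
  induction s using Finset.induction with
  | empty => exact ⟨1, IsU.one', by simp⟩
  | @insert i s hni ih =>
    obtain ⟨U, hU, hprod⟩ := ih (fun j hj => h j (Finset.mem_insert_of_mem hj))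
    obtain ⟨u, hu, hgi⟩ := h _ (Finset.mem_insert_self _ _)
    refine ⟨u * U, hu.mul hU, ?_⟩
    rw [Finset.prod_insert hni, hprod, hgi, Finset.card_insert_of_notMem hni, pow_succ]
    ring

end AuxRoots

/-- v_β(B·O_K) = v_β(C·O_K) = 2 and v_β(A·O_K) = (p·k − 1)(r − 1) + 1. -/
theorem stmt_11 (r : ℕ) (hr : r.Prime) (hr5 : 5 < r)
    (L : Type) [Field L] [NumberField L] (ζ : L) (hζ : IsPrimitiveRoot ζ r)
    (K : IntermediateField ℚ L) (hK : K = ℚ⟮ζ + ζ⁻¹⟯) [NumberField K]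
    (α : ℕ → 𝓞 K) (hα : ∀ j, ((α j : K) : L) = ζ ^ j + ζ⁻¹ ^ j)
    (β : Ideal (𝓞 K)) (hβ : β = Ideal.span {(2 : 𝓞 K) - α 1})
    (D : ℤ) (hD : D ≠ 0) (hDr : Int.gcd D r = 1)
    (p : ℕ) (hp : p.Prime) (hpr : p ≠ r)
    (x y z : ℤ) (hgcd : Int.gcd (Int.gcd x y) z = 1) (hxyz : x * y * z ≠ 0)
    (heq : x ^ r + y ^ r = D * z ^ p)
    (hk : 0 < padicValInt r z)
    (f : ℕ → 𝓞 K)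
    (hf : ∀ j, f j = (x : 𝓞 K) ^ 2 + α j * (x : 𝓞 K) * (y : 𝓞 K) + (y : 𝓞 K) ^ 2)
    (A B C : 𝓞 K)
    (hA : A = (α 1 - α 2) * ((x : 𝓞 K) + (y : 𝓞 K)) ^ 2)
    (hB : B = (α 2 - 2) * f 1)
    (hC : C = (2 - α 1) * f 2) :
    emultiplicity β (Ideal.span {B}) = 2 ∧
    emultiplicity β (Ideal.span {C}) = 2 ∧
    emultiplicity β (Ideal.span {A}) =
      (((p * padicValInt r z - 1) * (r - 1) + 1 : ℕ) : ℕ∞) := by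
  classical
  haveI : Fact r.Prime := ⟨hr⟩
  haveI : NeZero r := ⟨by omega⟩
  have hr7 : 7 ≤ r := by
    have h6 : r ≠ 6 := by intro h; rw [h] at hr; norm_num at hr
    omega
  ------------------------------------------------------------------
  -- Integer-side: exact r-adic valuation of x + y
  ------------------------------------------------------------------
  have hx0 : x ≠ 0 := fun h => hxyz (by simp [h])
  have hy0 : y ≠ 0 := fun h => hxyz (by simp [h])
  have hz0 : z ≠ 0 := fun h => hxyz (by simp [h])
  set k := padicValInt r z with hkdef
  have hrZ : Prime (r : ℤ) := Nat.prime_iff_prime_int.mp hr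
  have hrzk : (r : ℤ) ^ k ∣ z := padicValInt_dvd z
  have hrz : (r : ℤ) ∣ z := dvd_trans (dvd_pow_self _ (by omega : k ≠ 0)) hrzk
  have hodd : Odd r := hr.odd_of_ne_two (by omega)
  have hrxy : (r : ℤ) ∣ x + y := by
    have hcast := congrArg (Int.cast : ℤ → ZMod r) heq
    push_cast at hcast
    have hz' : (z : ZMod r) = 0 := (ZMod.intCast_zmod_eq_zero_iff_dvd z r).mpr hrz
    rw [hz', zero_pow hp.ne_zero, mul_zero, ZMod.pow_card, ZMod.pow_card] at hcast
    exact (ZMod.intCast_zmod_eq_zero_iff_dvd _ r).mp (by push_cast; exact hcast)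
  have hrx : ¬ (r : ℤ) ∣ x := by
    intro h
    have hy : (r : ℤ) ∣ y := (dvd_add_right h).mp hrxy
    have h1 : (r : ℤ) ∣ (Int.gcd x y : ℤ) := Int.dvd_coe_gcd h hy
    have h2 : (r : ℤ) ∣ (Int.gcd (Int.gcd x y) z : ℤ) := Int.dvd_coe_gcd h1 hrz
    rw [hgcd] at h2
    have := Int.le_of_dvd one_pos h2
    omega
  have hry : ¬ (r : ℤ) ∣ y := fun h => hrx ((dvd_add_left h).mp hrxy)
  have hrxyprod : ¬ (r : ℤ) ∣ x * y := by
    intro h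
    rcases hrZ.2.2 _ _ h with h | h
    · exact hrx h
    · exact hry h
  have hxy0 : x + y ≠ 0 := by
    intro h0
    have hyx : y = -x := by omega
    have hzero : x ^ r + y ^ r = 0 := by rw [hyx, hodd.neg_pow]; ring
    rw [heq] at hzero
    rcases mul_eq_zero.mp hzero with h | h
    · exact hD h
    · exact hz0 (pow_eq_zero_iff hp.ne_zero |>.mp h)
  have hrD : ¬ (r : ℤ) ∣ D := by
    intro h
    have h2 : (r : ℤ) ∣ (Int.gcd D r : ℤ) := Int.dvd_coe_gcd h (by exact_mod_cast dvd_refl (r : ℤ))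
    rw [hDr] at h2
    have := Int.le_of_dvd one_pos h2
    omega
  have hEz : emultiplicity (r : ℤ) z = (k : ℕ∞) := by
    rw [emultiplicity_eq_coe]
    refine ⟨hrzk, fun hd => ?_⟩
    rcases (padicValInt_dvd_iff (k + 1) z).mp hd with h | h
    · exact hz0 h
    · omega
  have hlte := Int.emultiplicity_pow_add_pow hr hodd hrxy hrx hodd
  rw [heq] at hlte
  have hmulR : emultiplicity ((r : ℕ) : ℤ) (D * z ^ p) = ((p * k : ℕ) : ℕ∞) := by
    rw [emultiplicity_mul hrZ, emultiplicity_pow hrZ, emultiplicity_eq_zero.mpr hrD, hEz,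
      zero_add]
    push_cast
    ring
  have hmr : emultiplicity r r = (1 : ℕ∞) := by
    have h1 : emultiplicity r r = ((1 : ℕ) : ℕ∞) := by
      rw [emultiplicity_eq_coe]
      refine ⟨by simp, fun hd => ?_⟩
      have h2 := Nat.le_of_dvd (by omega) hd
      have h3 : r * r ≤ r := by nlinarith [pow_succ r 1, pow_one r]
      nlinarith
    simpa using h1
  rw [hmulR, hmr] at hlte
  have hfin : FiniteMultiplicity (r : ℤ) (x + y) :=
    Int.finiteMultiplicity_iff.mpr ⟨by simp; omega, hxy0⟩
  have hpk2 : 2 ≤ p * k := by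
    have := hp.two_le
    nlinarith
  have hv : multiplicity (r : ℤ) (x + y) + 1 = p * k := by
    have h1 : ((multiplicity (r : ℤ) (x + y) : ℕ∞)) + 1 = ((p * k : ℕ) : ℕ∞) := by
      rw [hfin.emultiplicity_eq_multiplicity] at hlte
      exact hlte.symm
    exact_mod_cast h1
  obtain ⟨w, hw, hwnd⟩ := hfin.exists_eq_pow_mul_and_not_dvd
  set q : ℕ := p * k - 1 with hqdef
  have hq1 : 1 ≤ q := by omega
  rw [show multiplicity (r : ℤ) (x + y) = q from by omega] at hw
  -- hw : x + y = r ^ q * w,  hwnd : ¬ r ∣ w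
  ------------------------------------------------------------------
  -- L-side: cyclotomic unit facts
  ------------------------------------------------------------------
  set ψ := algebraMap (𝓞 K) L with hψdef
  have hψcoe : ∀ v : 𝓞 K, ψ v = ((v : K) : L) := fun v => rfl
  have hψα : ∀ j, ψ (α j) = ζ ^ j + ζ⁻¹ ^ j := fun j => (hψcoe _).trans (hα j)
  have hζint : IsIntegral ℤ ζ := hζ.isIntegral (by omega)
  have hζ1 : ζ ^ r = 1 := hζ.pow_eq_one
  have hred : ∀ a : ℕ, ζ ^ (a + r) = ζ ^ a := fun a => by rw [pow_add, hζ1, mul_one]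
  have hprod1 : ζ * ζ ^ (r - 1) = 1 := by
    calc ζ * ζ ^ (r - 1) = ζ ^ (r - 1 + 1) := (pow_succ' ζ (r - 1)).symm
    _ = 1 := by rw [show r - 1 + 1 = r from by omega, hζ1]
  have hinv : ζ⁻¹ = ζ ^ (r - 1) := inv_eq_of_mul_eq_one_right hprod1
  have hprod2 : ζ ^ 2 * ζ ^ (r - 2) = 1 := by
    rw [← pow_add, show 2 + (r - 2) = r from by omega, hζ1]
  have hi2 : ζ⁻¹ ^ 2 = ζ ^ (r - 2) := by
    rw [hinv, ← pow_mul, show (r - 1) * 2 = (r - 2) + r from by omega, hred]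
  have eA : ζ ^ (r - 2) * ζ = ζ ^ (r - 1) := by
    rw [← pow_succ]
    congr 1
    omega
  have eB : ζ ^ (r - 2) * ζ ^ 3 = ζ := by
    rw [← pow_add, show r - 2 + 3 = 1 + r from by omega, hred, pow_one]
  have eC : ζ ^ (r - 2) * ζ ^ 4 = ζ ^ 2 := by
    rw [← pow_add, show r - 2 + 4 = 2 + r from by omega, hred]
  set πO := (2 : 𝓞 K) - α 1 with hπOdef
  have hψπ : ψ πO = (1 - ζ) * (1 - ζ ^ (r - 1)) := by
    rw [hπOdef, map_sub, map_ofNat, hψα 1, pow_one, pow_one, hinv]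
    linear_combination -hprod1
  have hψ2 : ψ ((2 : 𝓞 K) - α 2) = (1 - ζ ^ 2) * (1 - ζ ^ (r - 2)) := by
    rw [map_sub, map_ofNat, hψα 2, hi2]
    linear_combination -hprod2
  have hψ3 : ψ (α 1 - α 2) = ((1 - ζ) * (1 - ζ ^ 3)) * (-ζ ^ (r - 2)) := by
    rw [map_sub, hψα 1, hψα 2, pow_one, pow_one, hi2, hinv]
    linear_combination -eA - eB + eC
  -- primitivity of powers
  have hndvd : ∀ j : ℕ, 0 < j → j < r → ¬ r ∣ j := fun j h1 h2 hd =>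
    absurd (Nat.le_of_dvd h1 hd) (by omega)
  have hprim : ∀ j : ℕ, 0 < j → j < r → IsPrimitiveRoot (ζ ^ j) r := fun j h1 h2 =>
    hζ.pow_of_coprime j (Nat.Coprime.symm (hr.coprime_iff_not_dvd.mpr (hndvd j h1 h2)))
  obtain ⟨u₁, hu₁, e₁⟩ := isU_ratio (L := L) (by omega : 1 < r) hζ
    (hprim 2 (by omega) (by omega)) hζint (hζint.pow 2)
  obtain ⟨u₂, hu₂, e₂⟩ := isU_ratio (L := L) (by omega : 1 < r)
    (hprim (r - 1) (by omega) (by omega)) (hprim (r - 2) (by omega) (by omega))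
    (hζint.pow (r - 1)) (hζint.pow (r - 2))
  obtain ⟨u₃, hu₃, e₃⟩ := isU_ratio (L := L) (by omega : 1 < r)
    (hprim (r - 1) (by omega) (by omega)) (hprim 3 (by omega) (by omega))
    (hζint.pow (r - 1)) (hζint.pow 3)
  obtain ⟨u₄, hu₄, e₄⟩ := isU_ratio (L := L) (by omega : 1 < r) hζ
    (hprim (r - 1) (by omega) (by omega)) hζint (hζint.pow (r - 1))
  have hUneg : IsU L (-ζ ^ (r - 2)) :=
    ⟨(hζint.pow _).neg, -ζ ^ 2, (hζint.pow 2).neg,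
      by rw [neg_mul_neg, mul_comm, hprod2]⟩
  have hassoc2 : Associated πO ((2 : 𝓞 K) - α 2) :=
    assoc_of_isU (hu₁.mul hu₂) (by rw [hψ2, hψπ, e₁, e₂]; ring)
  have hassoc3 : Associated πO (α 1 - α 2) :=
    assoc_of_isU (hu₃.mul hUneg) (by rw [hψ3, hψπ, e₃]; ring)
  ------------------------------------------------------------------
  -- r is associated to πO ^ m
  ------------------------------------------------------------------
  set m : ℕ := (r - 1) / 2 with hmdef
  have hm : 2 * m = r - 1 := by
    obtain ⟨c, hc⟩ := hodd
    omega
  have hm3 : 3 ≤ m := by omega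
  have hpos : 0 < r := by omega
  have h1mem : (1 : L) ∈ Polynomial.nthRootsFinset r (1 : L) :=
    Polynomial.one_mem_nthRootsFinset hpos
  have hprodval := prod_one_sub_nthRoots (by omega : 1 < r) hζ
  have hcard : ((Polynomial.nthRootsFinset r (1 : L)).erase 1).card = r - 1 := by
    rw [Finset.card_erase_of_mem h1mem, hζ.card_nthRootsFinset]
  have hfactors : ∀ η ∈ (Polynomial.nthRootsFinset r (1 : L)).erase 1,
      ∃ u, IsU L u ∧ 1 - η = (1 - ζ) * u := by
    intro η hη
    have hη1 : η ≠ 1 := Finset.ne_of_mem_erase hη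
    have hηr : η ^ r = 1 :=
      (Polynomial.mem_nthRootsFinset hpos (1 : L)).mp (Finset.mem_of_mem_erase hη)
    have hord : orderOf η = r := by
      rcases hr.eq_one_or_self_of_dvd (orderOf η) (orderOf_dvd_of_pow_eq_one hηr) with h | h
      · exact absurd (orderOf_eq_one_iff.mp h) hη1
      · exact h
    have hηprim : IsPrimitiveRoot η r := hord ▸ IsPrimitiveRoot.orderOf η
    have hηint : IsIntegral ℤ η := by
      obtain ⟨i, -, hi⟩ := hζ.eq_pow_of_pow_eq_one hηr
      exact hi ▸ hζint.pow i
    exact isU_ratio (by omega : 1 < r) hζ hηprim hζint hηint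
  obtain ⟨U, hU, hUeq⟩ := exists_isU_prod _ _ _ hfactors
  have hrL : (r : L) = (1 - ζ) ^ (r - 1) * U := by rw [← hprodval, hUeq, hcard]
  obtain ⟨hu₄1, u₄', hu₄2, hu₄3⟩ := hu₄
  have hu₄inv : IsU L u₄' := ⟨hu₄2, u₄, hu₄1, by rw [mul_comm]; exact hu₄3⟩
  have hψπm : ψ (πO ^ m) = (1 - ζ) ^ (r - 1) * u₄ ^ m := by
    rw [map_pow, hψπ, e₄, show (1 - ζ) * ((1 - ζ) * u₄) = (1 - ζ) ^ 2 * u₄ from by ring,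
      mul_pow, ← pow_mul, hm]
  have hψrO : ψ ((r : 𝓞 K)) = (1 - ζ) ^ (r - 1) * U := by
    rw [map_natCast, hrL]
  have h44 : u₄ ^ m * u₄' ^ m = 1 := by rw [← mul_pow, hu₄3, one_pow]
  have hequR : ψ ((r : 𝓞 K)) = ψ (πO ^ m) * (u₄' ^ m * U) := by
    rw [hψrO, hψπm]
    linear_combination (-(1 - ζ) ^ (r - 1) * U) * h44
  have hassocR : Associated (πO ^ m) ((r : 𝓞 K)) :=
    assoc_of_isU ((hu₄inv.pow m).mul hU) hequR
  ------------------------------------------------------------------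
  -- 𝓞 K-side arithmetic
  ------------------------------------------------------------------
  obtain ⟨u2, hu2⟩ := hassoc2
  obtain ⟨u3, hu3⟩ := hassoc3
  obtain ⟨uR, huR⟩ := hassocR
  have hπ0 : πO ≠ 0 := by
    intro h
    rw [h, zero_pow (by omega : m ≠ 0), zero_mul] at huR
    exact (Nat.cast_ne_zero.mpr (by omega : r ≠ 0) : ((r : ℕ) : 𝓞 K) ≠ 0) huR.symm
  have hrdvdπm : ((r : ℕ) : 𝓞 K) ∣ πO ^ m :=
    ⟨(uR⁻¹ : (𝓞 K)ˣ), by rw [← huR, mul_assoc, Units.mul_inv, mul_one]⟩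
  have key_nodvd : ∀ t : ℤ, ¬ (r : ℤ) ∣ t → ¬ πO ∣ (t : 𝓞 K) := by
    intro t hrt hdvd
    have h1 : πO ^ m ∣ (t : 𝓞 K) ^ m := pow_dvd_pow_of_dvd hdvd m
    have h2 : ((r : ℤ) : 𝓞 K) ∣ ((t ^ m : ℤ) : 𝓞 K) := by
      push_cast
      exact dvd_trans hrdvdπm h1
    exact hrt (hrZ.dvd_of_dvd_pow (int_dvd_of_dvd h2))
  set X := (x : 𝓞 K) with hXdef
  set Y := (y : 𝓞 K) with hYdef
  set W := (w : 𝓞 K) with hWdef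
  have hxyO : X + Y = ((r : ℕ) : 𝓞 K) ^ q * W := by
    have := congrArg (Int.cast : ℤ → 𝓞 K) hw
    push_cast at this
    exact this
  set E : ℕ := m * q with hEdef
  have hE1 : 1 ≤ E := by
    rw [hEdef]
    exact Nat.one_le_iff_ne_zero.mpr (Nat.mul_ne_zero (by omega) (by omega))
  have ha1 : α 1 = 2 - πO := by linear_combination hπOdef
  have ha2 : α 2 = 2 - πO * ↑u2 := by linear_combination hu2
  have hS : X + Y = πO ^ E * ((↑uR : 𝓞 K) ^ q * W) := by
    rw [hxyO, ← huR, mul_pow, ← pow_mul, hEdef, mul_assoc]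
  have h1 : (X + Y) ^ 2 = (πO ^ E) ^ 2 * (((↑uR : 𝓞 K) ^ q) ^ 2 * W ^ 2) := by
    rw [hS]; ring
  have hpowB : (πO ^ E) ^ 2 = πO * πO ^ (2 * E - 1) := by
    rw [← pow_mul, ← pow_succ']
    congr 1
    omega
  have hpowA : πO * (πO ^ E) ^ 2 = πO ^ (2 * E + 1) := by
    rw [← pow_mul, ← pow_succ']
    congr 1
    omega
  set GG := ((↑uR : 𝓞 K) ^ q) ^ 2 * W ^ 2 with hGGdef
  -- B
  have hBeq : B = πO ^ 2 * (-(↑u2) * (πO ^ (2 * E - 1) * GG - X * Y)) := by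
    calc B = -(↑u2) * πO * ((X + Y) ^ 2 - πO * (X * Y)) := by
          rw [hB, hf 1, ha2, ha1]; ring
    _ = -(↑u2) * πO * (πO * πO ^ (2 * E - 1) * GG - πO * (X * Y)) := by
          rw [h1, hpowB]
    _ = πO ^ 2 * (-(↑u2) * (πO ^ (2 * E - 1) * GG - X * Y)) := by ring
  have hB2 : πO ^ 2 ∣ B := ⟨_, hBeq⟩
  have hB3 : ¬ πO ^ 3 ∣ B := by
    intro hdvd
    rw [hBeq, show (3 : ℕ) = 2 + 1 from rfl, pow_succ] at hdvd
    have h4 : πO ∣ -(↑u2) * (πO ^ (2 * E - 1) * GG - X * Y) :=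
      (mul_dvd_mul_iff_left (pow_ne_zero 2 hπ0)).mp hdvd
    rw [neg_mul] at h4
    have h5 : πO ∣ (↑u2 : 𝓞 K) * (πO ^ (2 * E - 1) * GG - X * Y) := (dvd_neg).mp h4
    have h6 : πO ∣ πO ^ (2 * E - 1) * GG - X * Y := (u2.isUnit.dvd_mul_left).mp h5
    have h7 : πO ∣ πO ^ (2 * E - 1) * GG :=
      dvd_mul_of_dvd_left (dvd_pow_self πO (by omega : 2 * E - 1 ≠ 0)) _
    have h8 := dvd_sub h7 h6
    rw [sub_sub_cancel] at h8
    exact key_nodvd (x * y) hrxyprod (by push_cast; exact h8)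
  -- C
  have hCeq : C = πO ^ 2 * (πO ^ (2 * E - 1) * GG - ↑u2 * (X * Y)) := by
    calc C = πO * ((X + Y) ^ 2 - πO * (↑u2 * (X * Y))) := by
          rw [hC, hf 2, ha2]; ring
    _ = πO * (πO * πO ^ (2 * E - 1) * GG - πO * (↑u2 * (X * Y))) := by
          rw [h1, hpowB]
    _ = πO ^ 2 * (πO ^ (2 * E - 1) * GG - ↑u2 * (X * Y)) := by ring
  have hC2 : πO ^ 2 ∣ C := ⟨_, hCeq⟩
  have hC3 : ¬ πO ^ 3 ∣ C := by
    intro hdvd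
    rw [hCeq, show (3 : ℕ) = 2 + 1 from rfl, pow_succ] at hdvd
    have h6 : πO ∣ πO ^ (2 * E - 1) * GG - ↑u2 * (X * Y) :=
      (mul_dvd_mul_iff_left (pow_ne_zero 2 hπ0)).mp hdvd
    have h7 : πO ∣ πO ^ (2 * E - 1) * GG :=
      dvd_mul_of_dvd_left (dvd_pow_self πO (by omega : 2 * E - 1 ≠ 0)) _
    have h8 := dvd_sub h7 h6
    rw [sub_sub_cancel] at h8
    have h9 : πO ∣ X * Y := (u2.isUnit.dvd_mul_left).mp h8
    exact key_nodvd (x * y) hrxyprod (by push_cast; exact h9)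
  -- A
  have hAeq : A = πO ^ (2 * E + 1) * (↑u3 * GG) := by
    calc A = (πO * ↑u3) * (X + Y) ^ 2 := by rw [hA, hu3]
    _ = πO * (πO ^ E) ^ 2 * (↑u3 * GG) := by rw [h1, hGGdef]; ring
    _ = πO ^ (2 * E + 1) * (↑u3 * GG) := by rw [hpowA]
  have hA1 : πO ^ (2 * E + 1) ∣ A := ⟨_, hAeq⟩
  have hA2 : ¬ πO ^ (2 * E + 1 + 1) ∣ A := by
    intro hdvd
    rw [hAeq, pow_succ] at hdvd
    have h4 : πO ∣ ↑u3 * GG :=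
      (mul_dvd_mul_iff_left (pow_ne_zero (2 * E + 1) hπ0)).mp hdvd
    have h5 : πO ∣ GG := (u3.isUnit.dvd_mul_left).mp h4
    rw [hGGdef] at h5
    have h6 : πO ∣ W ^ 2 := (((uR.isUnit.pow q).pow 2).dvd_mul_left).mp h5
    have h7 : ¬ (r : ℤ) ∣ w ^ 2 := fun hd => hwnd (hrZ.dvd_of_dvd_pow hd)
    exact key_nodvd (w ^ 2) h7 (by push_cast; exact h6)
  ------------------------------------------------------------------
  -- transfer to ideals
  ------------------------------------------------------------------
  have hemul : ∀ (b : 𝓞 K) (n : ℕ), πO ^ n ∣ b → ¬ πO ^ (n + 1) ∣ b →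
      emultiplicity β (Ideal.span {b}) = (n : ℕ∞) := by
    intro b n hd1 hd2
    have key : ∀ t : ℕ, (β ^ t ∣ Ideal.span {b} ↔ πO ^ t ∣ b) := by
      intro t
      rw [hβ, Ideal.span_singleton_pow, Ideal.dvd_iff_le,
        Ideal.span_singleton_le_span_singleton]
    exact emultiplicity_eq_of_dvd_of_not_dvd ((key n).mpr hd1) (fun hc => hd2 ((key _).mp hc))
  have hNeq : (p * k - 1) * (r - 1) + 1 = 2 * E + 1 := by
    rw [hEdef, ← hm, ← hqdef]
    ring
  refine ⟨?_, ?_, ?_⟩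
  · have := hemul B 2 hB2 hB3
    simpa using this
  · have := hemul C 2 hC2 hC3
    simpa using this
  · rw [hNeq]
    exact hemul A (2 * E + 1) hA1 hA2
end

section
/- Let D be a nonzero integer with gcd(D, r) = 1, let p be an odd prime with p ≠ r, and let (x, y, z) be integers with gcd(x, y, z) = 1, xyz ≠ 0, x^r + y^r = D·z^p, and v_r(z) > 0. Set A = (α_1 − α_2)(x + y)², B = (α_2 − 2)·f_1, and let E_2 be the Weierstrass curve y² = x(x − A)(x + B) over K. Then v_β(j(E_2)) < 0 and p does not divide v_β(j(E_2)). -/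
set_option maxHeartbeats 4000000
set_option synthInstance.maxHeartbeats 100000

open NumberField IntermediateField IsDedekindDomain Multiplicative

private def stmtW {R : Type*} [CommRing R] (α : ℕ → R) : ℕ → R
  | 0 => 0
  | j+1 => stmtW α j + 1 + ∑ d ∈ Finset.Icc 1 j, α d

private lemma zm0_mul (n m : ℤ) :
    ((ofAdd (-n) : Multiplicative ℤ) : WithZero (Multiplicative ℤ)) * (ofAdd (-m) : Multiplicative ℤ) = ((ofAdd (-(n+m)) : Multiplicative ℤ) : WithZero (Multiplicative ℤ)) := by
  rw [← WithZero.coe_mul, ← ofAdd_add]; ring_nf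

private lemma zm0_lt {n m : ℤ} (h : m < n) :
    ((ofAdd (-n) : Multiplicative ℤ) : WithZero (Multiplicative ℤ)) < (ofAdd (-m) : Multiplicative ℤ) := by
  rw [WithZero.coe_lt_coe, ofAdd_lt]; omega

private lemma zm0_pow (n : ℤ) (e : ℕ) :
    ((ofAdd (-n) : Multiplicative ℤ) : WithZero (Multiplicative ℤ))^e = ((ofAdd (-(e*n)) : Multiplicative ℤ) : WithZero (Multiplicative ℤ)) := by
  rw [← WithZero.coe_pow, WithZero.coe_inj, ← ofAdd_nsmul]
  congr 1
  simp [smul_eq_mul]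

private lemma zm0_div (n m : ℤ) :
    ((ofAdd (-n) : Multiplicative ℤ) : WithZero (Multiplicative ℤ)) / (ofAdd (-m) : Multiplicative ℤ) = ((ofAdd (m-n) : Multiplicative ℤ) : WithZero (Multiplicative ℤ)) := by
  rw [← WithZero.coe_div, WithZero.coe_inj, ← ofAdd_sub]
  congr 1; ring

private lemma zm0_congr {a b : ℤ} (h : a = b) :
    ((ofAdd a : Multiplicative ℤ) : WithZero (Multiplicative ℤ)) = ((ofAdd b : Multiplicative ℤ) : WithZero (Multiplicative ℤ)) := by
  rw [h]

private lemma int_val_unit {R : Type*} [CommRing R] [IsDedekindDomain R]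
    (v : HeightOneSpectrum R) (a : R) (ha : a ∉ v.asIdeal) : v.intValuation a = 1 := by
  have h1 := v.intValuation_le_one a
  rcases lt_or_eq_of_le h1 with h | h
  · exact absurd (Ideal.dvd_span_singleton.mp ((v.intValuation_lt_one_iff_dvd a).mp h)) ha
  · exact h

/-- for p an odd prime, v_β(j(E₂)) < 0 and p ∤ v_β(j(E₂)). -/
theorem stmt_13 (r : ℕ) (hr : r.Prime) (hr5 : 5 < r)
    (L : Type) [Field L] [NumberField L] (ζ : L) (hζ : IsPrimitiveRoot ζ r)
    (K : IntermediateField ℚ L) (hK : K = ℚ⟮ζ + ζ⁻¹⟯) [NumberField K]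
    (α : ℕ → 𝓞 K) (hα : ∀ j, ((α j : K) : L) = ζ ^ j + ζ⁻¹ ^ j)
    (D : ℤ) (hD : D ≠ 0) (hDr : Int.gcd D r = 1)
    (p : ℕ) (hp : p.Prime) (hp2 : p ≠ 2) (hpr : p ≠ r)
    (x y z : ℤ) (hgcd : Int.gcd (Int.gcd x y) z = 1) (hxyz : x * y * z ≠ 0)
    (heq : x ^ r + y ^ r = D * z ^ p)
    (hk : 0 < padicValInt r z)
    (f : ℕ → 𝓞 K)
    (hf : ∀ j, f j = (x : 𝓞 K) ^ 2 + α j * (x : 𝓞 K) * (y : 𝓞 K) + (y : 𝓞 K) ^ 2)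
    (A B : 𝓞 K)
    (hA : A = (α 1 - α 2) * ((x : 𝓞 K) + (y : 𝓞 K)) ^ 2)
    (hB : B = (α 2 - 2) * f 1)
    (E : WeierstrassCurve K)
    (hE : E = ⟨0, (B : K) - (A : K), 0, -((A : K) * (B : K)), 0⟩)
    (β' : HeightOneSpectrum (𝓞 K))
    (hβ' : β'.asIdeal = Ideal.span {(2 : 𝓞 K) - α 1}) :
    ∃ m : ℤ, m < 0 ∧ ¬ (p : ℤ) ∣ m ∧
      β'.valuation K (E.c₄ ^ 3 / E.Δ) = Multiplicative.ofAdd (-m) := by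
  haveI : Fact r.Prime := ⟨hr⟩
  haveI : Fact p.Prime := ⟨hp⟩
  classical
  -- basic numerology
  set e : ℕ := (r - 1) / 2 with he_def
  have hrodd : Odd r := hr.odd_of_ne_two (by omega)
  have he2 : 2 * e + 1 = r := by
    obtain ⟨t, ht⟩ := hrodd; omega
  have he3 : 3 ≤ e := by omega
  -- ζ facts
  have hζ0 : ζ ≠ 0 := by
    intro h
    have := hζ.pow_eq_one
    rw [h, zero_pow (by omega)] at this
    exact zero_ne_one this
  have hζpow : ∀ i : ℕ, ζ ^ i ≠ 0 := fun i => pow_ne_zero i hζ0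
  have hζc : ∀ i : ℕ, ζ ^ i * ζ⁻¹ ^ i = 1 := fun i => by
    rw [inv_pow, mul_inv_cancel₀ (hζpow i)]
  -- the embedding 𝓞 K → L
  let ιh : 𝓞 K →+* L := (algebraMap K L).comp (algebraMap (𝓞 K) K)
  have hι : ∀ a : 𝓞 K, ιh a = ((a : K) : L) := fun a => rfl
  have hinj : Function.Injective ιh := by
    intro a b h
    rw [hι, hι] at h
    exact_mod_cast h
  have hια : ∀ j, ιh (α j) = ζ ^ j + ζ⁻¹ ^ j := fun j => by rw [hι]; exact hα j
  -- basic algebraic identities among the α's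
  have hι2 : ιh 2 = 2 := by rw [hι]; exact_mod_cast rfl
  have hα1sq : α 1 ^ 2 = α 2 + 2 := by
    apply hinj
    rw [map_pow, map_add, hια, hια, hι2]
    field_simp
    ring
  set π : 𝓞 K := 2 - α 1 with hπ_def
  have halg2 : α 1 - α 2 = π * (1 + α 1) := by
    rw [hπ_def]; linear_combination hα1sq
  have halg3 : α 2 - 2 = -(π * (2 + α 1)) := by
    rw [hπ_def]; linear_combination -hα1sq
  -- the W-sequence: 2 - α j = π * W j
  have hιπ : ιh π = (1 - ζ) * (1 - ζ⁻¹) := by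
    rw [hπ_def, map_sub, hια, hι2]
    have hc1 : ζ * ζ⁻¹ = 1 := mul_inv_cancel₀ hζ0
    linear_combination -hc1
  have hιW : ∀ j, ιh (stmtW α j) =
      (∑ i ∈ Finset.range j, ζ ^ i) * (∑ i ∈ Finset.range j, ζ⁻¹ ^ i) := by
    intro j
    induction j with
    | zero => simp [stmtW]
    | succ j ih =>
      have key : ζ ^ j * (∑ i ∈ Finset.range j, ζ⁻¹ ^ i)
          + ζ⁻¹ ^ j * (∑ i ∈ Finset.range j, ζ ^ i)
          = ∑ d ∈ Finset.Icc 1 j, (ζ ^ d + ζ⁻¹ ^ d) := by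
        rw [Finset.mul_sum, Finset.mul_sum, ← Finset.sum_add_distrib]
        have h1 : ∀ i ∈ Finset.range j,
            ζ ^ j * ζ⁻¹ ^ i + ζ⁻¹ ^ j * ζ ^ i
            = (fun i => ζ ^ (i+1) + ζ⁻¹ ^ (i+1)) (j - 1 - i) := by
          intro i hi
          rw [Finset.mem_range] at hi
          have hd : j - 1 - i + 1 = j - i := by omega
          have e1 : ζ ^ j = ζ ^ (j - i) * ζ ^ i := by
            rw [← pow_add]; congr 1; omega
          have e2 : ζ⁻¹ ^ j = ζ⁻¹ ^ (j - i) * ζ⁻¹ ^ i := by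
            rw [← pow_add]; congr 1; omega
          simp only [hd]
          rw [e1, e2, mul_assoc, mul_assoc]
          have c1 : ζ ^ i * ζ⁻¹ ^ i = 1 := hζc i
          have c2 : ζ⁻¹ ^ i * ζ ^ i = 1 := by rw [mul_comm]; exact c1
          rw [c1, c2, mul_one, mul_one]
        have h2 : ∑ d ∈ Finset.Icc 1 j, (ζ ^ d + ζ⁻¹ ^ d)
            = ∑ i ∈ Finset.range j, (ζ ^ (i+1) + ζ⁻¹ ^ (i+1)) := by
          rw [← Finset.Ico_add_one_right_eq_Icc, Finset.sum_Ico_eq_sum_range]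
          simp [add_comm]
        rw [Finset.sum_congr rfl h1, h2]
        exact Finset.sum_range_reflect (fun i => ζ ^ (i+1) + ζ⁻¹ ^ (i+1)) j
      have hstep : stmtW α (j+1) = stmtW α j + 1 + ∑ d ∈ Finset.Icc 1 j, α d := rfl
      rw [hstep, map_add, map_add, map_one, map_sum, ih,
        Finset.sum_congr rfl (fun d _ => hια d),
        Finset.sum_range_succ, Finset.sum_range_succ]
      linear_combination -key - hζc j
  have hπW : ∀ j, 2 - α j = π * stmtW α j := by
    intro j
    apply hinj
    rw [map_sub, map_mul, hια, hιπ, hιW, hι2]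
    have g1 : (∑ i ∈ Finset.range j, ζ ^ i) * (ζ - 1) = ζ ^ j - 1 := geom_sum_mul ζ j
    have g2 : (∑ i ∈ Finset.range j, ζ⁻¹ ^ i) * (ζ⁻¹ - 1) = ζ⁻¹ ^ j - 1 := geom_sum_mul ζ⁻¹ j
    have t1 : (1 - ζ) * (1 - ζ⁻¹) * ((∑ i ∈ Finset.range j, ζ ^ i) * (∑ i ∈ Finset.range j, ζ⁻¹ ^ i))
        = ((∑ i ∈ Finset.range j, ζ ^ i) * (ζ - 1)) * ((∑ i ∈ Finset.range j, ζ⁻¹ ^ i) * (ζ⁻¹ - 1)) := by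
      ring
    rw [t1, g1, g2]
    linear_combination -hζc j
  -- product formula
  have hπmem : π ∈ β'.asIdeal := by
    rw [hβ']; exact Ideal.mem_span_singleton_self π
  have hπ0 : π ≠ 0 := by
    intro h
    exact β'.ne_bot (by rw [hβ']; exact Ideal.span_singleton_eq_bot.mpr h)
  have hprodα : ((r : ℕ) : 𝓞 K) = ∏ j ∈ Finset.Icc 1 e, (2 - α j) := by
    apply hinj
    rw [map_prod, map_natCast]
    have hterm : ∀ j ∈ Finset.Icc 1 e, ιh (2 - α j) = (1 - ζ ^ j) * (1 - ζ ^ (r - j)) := by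
      intro j hj
      rw [Finset.mem_Icc] at hj
      rw [map_sub, hια, hι2]
      have hc : ζ ^ (r - j) * ζ ^ j = 1 := by
        rw [← pow_add, show r - j + j = r by omega, hζ.pow_eq_one]
      have hinvj : ζ⁻¹ ^ j = ζ ^ (r - j) := by
        have hc' : ζ ^ j * ζ ^ (r - j) = 1 := by
          rw [← pow_add, show j + (r - j) = r by omega, hζ.pow_eq_one]
        rw [inv_pow]
        exact inv_eq_of_mul_eq_one_right hc'
      rw [hinvj]
      linear_combination -hc
    rw [Finset.prod_congr rfl hterm, Finset.prod_mul_distrib]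
    have hbase1 : r - 1 + 1 = r := by omega
    have base : ∏ k ∈ Finset.range (r-1), (1 - ζ^(k+1)) = ((r:ℕ) : L) := by
      have := IsPrimitiveRoot.prod_one_sub_pow_eq_order (n := r - 1) (μ := ζ) (by rwa [hbase1])
      rw [this, ← Nat.cast_succ]
      congr 1
    rw [← base, show r - 1 = e + e by omega, Finset.prod_range_add]
    have c1 : ∏ j ∈ Finset.Icc 1 e, (1 - ζ^j) = ∏ i ∈ Finset.range e, (1 - ζ^(i+1)) := by
      rw [← Finset.Ico_add_one_right_eq_Icc, Finset.prod_Ico_eq_prod_range]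
      simp [add_comm]
    have c2 : ∏ j ∈ Finset.Icc 1 e, (1 - ζ^(r-j)) = ∏ i ∈ Finset.range e, (1 - ζ^(e+(i+1))) := by
      rw [← Finset.Ico_add_one_right_eq_Icc, Finset.prod_Ico_eq_prod_range]
      simp only [Nat.add_sub_cancel]
      have hre : ∀ i ∈ Finset.range e, (1 - ζ^(r-(1+i))) = (fun i => 1 - ζ^(e+(i+1))) (e-1-i) := by
        intro i hi
        rw [Finset.mem_range] at hi
        simp only
        congr 2
        omega
      rw [Finset.prod_congr rfl hre]
      exact Finset.prod_range_reflect (fun i => 1 - ζ^(e+(i+1))) e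
    rw [c1, c2]
    rfl
  have hprod : ((r : ℕ) : 𝓞 K) = π ^ e * ∏ j ∈ Finset.Icc 1 e, stmtW α j := by
    rw [hprodα, Finset.prod_congr rfl (fun j _ => hπW j), Finset.prod_mul_distrib,
      Finset.prod_const, Nat.card_Icc, Nat.add_sub_cancel]
  have hrmem : ((r : ℕ) : 𝓞 K) ∈ β'.asIdeal := by
    rw [hprod]
    exact Ideal.mul_mem_right _ _ (Ideal.pow_mem_of_mem _ hπmem e (by omega))
  -- β ∩ ℤ = (r)
  have hint : ∀ t : ℤ, ((t : 𝓞 K)) ∈ β'.asIdeal → (r:ℤ) ∣ t := by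
    intro t ht
    by_contra hndvd
    have hcop : IsCoprime ((r:ℕ) : ℤ) t :=
      ((Nat.prime_iff_prime_int.mp hr).coprime_iff_not_dvd).mpr hndvd
    obtain ⟨a, b, hab⟩ := hcop
    have h2 := congrArg (fun s : ℤ => (s : 𝓞 K)) hab
    push_cast at h2
    have h1 : (1 : 𝓞 K) ∈ β'.asIdeal := by
      rw [← h2]
      exact add_mem (Ideal.mul_mem_left _ _ hrmem) (Ideal.mul_mem_left _ _ ht)
    exact β'.isPrime.ne_top ((Ideal.eq_top_iff_one _).mpr h1)
  -- W j ∉ β for 1 ≤ j ≤ e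
  have hαmem : ∀ d, α d - 2 ∈ β'.asIdeal := fun d => by
    have h : α d - 2 = -(π * stmtW α d) := by linear_combination -hπW d
    rw [h]; exact neg_mem (Ideal.mul_mem_right _ _ hπmem)
  have hWmod : ∀ j : ℕ, stmtW α j - ((j : ℕ) : 𝓞 K)^2 ∈ β'.asIdeal := by
    intro j
    induction j with
    | zero => simpa [stmtW] using Ideal.zero_mem β'.asIdeal
    | succ j ih =>
      have hsum : stmtW α (j+1) - (((j+1 : ℕ)) : 𝓞 K)^2
          = (stmtW α j - ((j:ℕ) : 𝓞 K)^2) + ∑ d ∈ Finset.Icc 1 j, (α d - 2) := by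
        rw [show stmtW α (j+1) = stmtW α j + 1 + ∑ d ∈ Finset.Icc 1 j, α d from rfl,
          Finset.sum_sub_distrib, Finset.sum_const, Nat.card_Icc, Nat.add_sub_cancel]
        simp only [nsmul_eq_mul]
        push_cast
        ring
      rw [hsum]
      exact add_mem ih (Ideal.sum_mem _ fun d _ => hαmem d)
  have hWnot : ∀ j : ℕ, 1 ≤ j → j ≤ e → stmtW α j ∉ β'.asIdeal := by
    intro j h1 h2 hmem
    have h3 : (((j:ℕ)) : 𝓞 K)^2 ∈ β'.asIdeal := by
      have h4 := sub_mem hmem (hWmod j)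
      simpa using h4
    have h5 : (((j^2 : ℤ)) : 𝓞 K) ∈ β'.asIdeal := by push_cast; exact h3
    have h6 := hint _ h5
    have h7 : (r:ℤ) ∣ (j:ℤ) := (Nat.prime_iff_prime_int.mp hr).dvd_of_dvd_pow (by exact_mod_cast h6)
    have h8 : r ∣ j := by exact_mod_cast h7
    have := Nat.le_of_dvd (by omega) h8
    omega
  -- integer arithmetic facts
  have hz0 : z ≠ 0 := fun h => hxyz (by rw [h, mul_zero])
  have hrz : (r:ℤ) ∣ z := by
    by_contra hnd
    rw [padicValInt.eq_zero_of_not_dvd hnd] at hk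
    exact lt_irrefl 0 hk
  have hrxy : (r:ℤ) ∣ x + y := by
    have hcast := congrArg (fun t : ℤ => (t : ZMod r)) heq
    push_cast at hcast
    rw [ZMod.pow_card, ZMod.pow_card] at hcast
    have hz' : ((z:ℤ) : ZMod r) = 0 := (ZMod.intCast_zmod_eq_zero_iff_dvd _ _).mpr hrz
    rw [hz', zero_pow hp.ne_zero, mul_zero] at hcast
    have hxyz0 : ((x + y : ℤ) : ZMod r) = 0 := by push_cast; exact hcast
    exact (ZMod.intCast_zmod_eq_zero_iff_dvd _ _).mp hxyz0
  have hrx : ¬ (r:ℤ) ∣ x := by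
    intro hdx
    have hdy : (r:ℤ) ∣ y := (dvd_add_right hdx).mp hrxy
    have h2 : (r:ℤ) ∣ ((Int.gcd ((Int.gcd x y : ℕ) : ℤ) z : ℕ) : ℤ) :=
      Int.dvd_coe_gcd (Int.dvd_coe_gcd hdx hdy) hrz
    rw [hgcd] at h2
    have := Int.le_of_dvd one_pos h2
    omega
  have hry : ¬ (r:ℤ) ∣ y := by
    intro hdy
    have hdx : (r:ℤ) ∣ x := (dvd_add_left hdy).mp hrxy
    have h2 : (r:ℤ) ∣ ((Int.gcd ((Int.gcd x y : ℕ) : ℤ) z : ℕ) : ℤ) :=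
      Int.dvd_coe_gcd (Int.dvd_coe_gcd hdx hdy) hrz
    rw [hgcd] at h2
    have := Int.le_of_dvd one_pos h2
    omega
  have hrD : ¬ (r:ℤ) ∣ D := by
    intro hd
    have h2 : (r:ℤ) ∣ ((Int.gcd D (r:ℤ) : ℕ) : ℤ) := Int.dvd_coe_gcd hd dvd_rfl
    rw [hDr] at h2
    have := Int.le_of_dvd one_pos h2
    omega
  have hxy0 : x + y ≠ 0 := by
    intro h0
    have hyx : y = -x := by omega
    rw [hyx, Odd.neg_pow hrodd, add_neg_cancel] at heq
    exact mul_ne_zero hD (pow_ne_zero p hz0) heq.symm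
  -- z = r^k * zu
  set k : ℕ := padicValInt r z with hk_def
  obtain ⟨zu, hzu⟩ : (r:ℤ)^k ∣ z := padicValInt_dvd z
  have hrzu : ¬ (r:ℤ) ∣ zu := by
    rintro ⟨c, hc⟩
    have hdd : (r:ℤ)^(k+1) ∣ z := ⟨c, by rw [hzu, hc]; ring⟩
    rw [padicValInt_dvd_iff] at hdd
    rcases hdd with h | h
    · exact hz0 h
    · omega
  -- LTE
  have hprimeInt : Prime ((r:ℕ):ℤ) := Nat.prime_iff_prime_int.mp hr
  have hlte := Int.emultiplicity_pow_add_pow (p := r) hr hrodd hrxy hrx hrodd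
  have hselfr : emultiplicity r r = (1:ℕ) := by
    apply emultiplicity_eq_of_dvd_of_not_dvd (by rw [pow_one])
    intro hdd
    have h1 := Nat.le_of_dvd (by omega) hdd
    rw [pow_succ, pow_one] at h1
    nlinarith
  have hleft : emultiplicity ((r:ℕ):ℤ) (x^r + y^r) = ((k * p : ℕ) : ℕ∞) := by
    rw [heq, hzu]
    apply emultiplicity_eq_of_dvd_of_not_dvd
    · exact ⟨D * zu^p, by ring⟩
    · rintro ⟨c, hc⟩
      have hcc : ((r:ℕ):ℤ)^(k*p) * (D * zu^p) = ((r:ℕ):ℤ)^(k*p) * ((r:ℤ) * c) := by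
        rw [pow_succ] at hc
        linear_combination hc
      have hc2 : D * zu^p = (r:ℤ) * c :=
        mul_left_cancel₀ (pow_ne_zero _ (by exact_mod_cast hr.ne_zero)) hcc
      have hdvd : (r:ℤ) ∣ D * zu^p := ⟨c, hc2⟩
      rcases hprimeInt.dvd_mul.mp hdvd with h | h
      · exact hrD h
      · exact hrzu (hprimeInt.dvd_of_dvd_pow h)
  have hwfin : FiniteMultiplicity ((r:ℕ):ℤ) (x+y) := by
    rw [Int.finiteMultiplicity_iff]
    constructor
    · simp only [Int.natAbs_natCast]
      omega
    · exact hxy0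
  set w : ℕ := multiplicity ((r:ℕ):ℤ) (x+y) with hw_def
  have hwem : emultiplicity ((r:ℕ):ℤ) (x+y) = (w : ℕ∞) := hwfin.emultiplicity_eq_multiplicity
  have hkpw : k * p = w + 1 := by
    have h1 : ((k*p : ℕ) : ℕ∞) = (w : ℕ∞) + 1 := by
      rw [← hleft, hlte, hwem, hselfr]
      norm_num
    exact_mod_cast h1
  obtain ⟨u, hu⟩ : ((r:ℕ):ℤ)^w ∣ (x+y) := pow_multiplicity_dvd _ _
  have hru : ¬ (r:ℤ) ∣ u := by
    rintro ⟨c, hc⟩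
    have hdd : ((r:ℕ):ℤ)^(w+1) ∣ (x+y) := ⟨c, by rw [hu, hc]; ring⟩
    exact hwfin.not_pow_dvd_of_multiplicity_lt (by omega) hdd
  -- bounds
  have hw2 : 2 ≤ w := by
    have hkp3 : 3 ≤ k * p := by
      have hp3 : 3 ≤ p := by
        have := hp.two_le
        omega
      have hk1 : 1 ≤ k := hk
      calc 3 = 1 * 3 := by omega
        _ ≤ k * p := Nat.mul_le_mul hk1 hp3
    omega
  have hew1 : (1:ℤ) ≤ (e:ℤ) * (w:ℤ) := by
    have h1 : (1:ℤ) ≤ (e:ℤ) := by exact_mod_cast (by omega : 1 ≤ e)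
    have h2 : (1:ℤ) ≤ (w:ℤ) := by exact_mod_cast (by omega : 1 ≤ w)
    nlinarith
  -- valuations
  have hval1 : ∀ t : ℤ, ¬ (r:ℤ) ∣ t → β'.intValuation ((t : 𝓞 K)) = 1 :=
    fun t ht => int_val_unit β' _ (fun hmem => ht (hint t hmem))
  have hvπ : β'.intValuation π = (ofAdd (-1:ℤ) : Multiplicative ℤ) :=
    β'.intValuation_singleton hπ0 hβ'
  have hvr : β'.intValuation (((r:ℕ)) : 𝓞 K) = (ofAdd (-(e:ℤ)) : Multiplicative ℤ) := by
    rw [hprod, map_mul, map_pow, hvπ, map_prod]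
    have hWone : ∏ j ∈ Finset.Icc 1 e, β'.intValuation (stmtW α j) = 1 :=
      Finset.prod_eq_one (fun j hj => by
        rw [Finset.mem_Icc] at hj
        exact int_val_unit β' _ (hWnot j hj.1 hj.2))
    rw [hWone, mul_one, zm0_pow]
    apply zm0_congr
    push_cast
    ring
  have hvxy : β'.intValuation ((x : 𝓞 K) + (y : 𝓞 K))
      = (ofAdd (-((e:ℤ)*(w:ℤ))) : Multiplicative ℤ) := by
    have hxyc : (x : 𝓞 K) + (y : 𝓞 K) = (((x + y : ℤ)) : 𝓞 K) := by push_cast; ring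
    rw [hxyc, hu]
    push_cast
    rw [map_mul, map_pow, hvr, hval1 u hru, mul_one, zm0_pow]
    apply zm0_congr
    ring
  have hvx : β'.intValuation ((x : 𝓞 K)) = 1 := hval1 x hrx
  have hvy : β'.intValuation ((y : 𝓞 K)) = 1 := hval1 y hry
  have h1α : (1 : 𝓞 K) + α 1 ∉ β'.asIdeal := by
    intro hmem
    have h3 : (((3:ℤ)) : 𝓞 K) ∈ β'.asIdeal := by
      have he : (((3:ℤ)) : 𝓞 K) = ((1 : 𝓞 K) + α 1) - (α 1 - 2) := by push_cast; ring
      rw [he]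
      exact sub_mem hmem (hαmem 1)
    have h4 := Int.le_of_dvd (by norm_num) (hint 3 h3)
    omega
  have h2α : (2 : 𝓞 K) + α 1 ∉ β'.asIdeal := by
    intro hmem
    have h3 : (((4:ℤ)) : 𝓞 K) ∈ β'.asIdeal := by
      have he : (((4:ℤ)) : 𝓞 K) = ((2 : 𝓞 K) + α 1) - (α 1 - 2) := by push_cast; ring
      rw [he]
      exact sub_mem hmem (hαmem 1)
    have h4 := Int.le_of_dvd (by norm_num) (hint 4 h3)
    omega
  have hv1α : β'.intValuation (1 + α 1) = 1 := int_val_unit β' _ h1α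
  have hv2α : β'.intValuation (2 + α 1) = 1 := int_val_unit β' _ h2α
  have hvsq : β'.intValuation (((x : 𝓞 K) + (y : 𝓞 K))^2)
      = (ofAdd (-(2*((e:ℤ)*(w:ℤ)))) : Multiplicative ℤ) := by
    rw [map_pow, hvxy, zm0_pow]
    apply zm0_congr
    push_cast
    ring
  have hvf1 : β'.intValuation (f 1) = (ofAdd (-1:ℤ) : Multiplicative ℤ) := by
    have hf1 : f 1 = ((x : 𝓞 K) + (y : 𝓞 K))^2 + -(π * ((x : 𝓞 K) * (y : 𝓞 K))) := by
      rw [hf 1, hπ_def]; ring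
    have hvneg : β'.intValuation (-(π * ((x : 𝓞 K) * (y : 𝓞 K))))
        = (ofAdd (-1:ℤ) : Multiplicative ℤ) := by
      rw [Valuation.map_neg, map_mul, map_mul, hvπ, hvx, hvy, mul_one, mul_one]
    rw [hf1, Valuation.map_add_eq_of_lt_right _
      (by rw [hvneg, hvsq]; exact zm0_lt (by linarith))]
    exact hvneg
  have hvA : β'.intValuation A = (ofAdd (-(1 + 2*((e:ℤ)*(w:ℤ)))) : Multiplicative ℤ) := by
    have hAeq : A = π * ((1 + α 1) * ((x : 𝓞 K) + (y : 𝓞 K))^2) := by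
      rw [hA, halg2]; ring
    rw [hAeq, map_mul, map_mul, hvπ, hv1α, hvsq, one_mul, zm0_mul]
  have hvB : β'.intValuation B = (ofAdd (-2:ℤ) : Multiplicative ℤ) := by
    have hBeq : B = -(π * ((2 + α 1) * f 1)) := by
      rw [hB, halg3]; ring
    rw [hBeq, Valuation.map_neg, map_mul, map_mul, hvπ, hv2α, hvf1, one_mul, zm0_mul]
    apply zm0_congr
    norm_num
  have hvApB : β'.intValuation (A + B) = (ofAdd (-2:ℤ) : Multiplicative ℤ) := by
    rw [Valuation.map_add_eq_of_lt_right _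
      (by rw [hvA, hvB]; exact zm0_lt (by linarith))]
    exact hvB
  have hvcore : β'.intValuation (A^2 + A*B + B^2) = (ofAdd (-4:ℤ) : Multiplicative ℤ) := by
    have hid : A^2 + A*B + B^2 = A*(A+B) + B^2 := by ring
    have hlt : β'.intValuation (A*(A+B)) < β'.intValuation (B^2) := by
      rw [map_mul, map_pow, hvA, hvApB, hvB, zm0_mul, zm0_pow]
      apply zm0_lt
      push_cast
      linarith
    rw [hid, Valuation.map_add_eq_of_lt_right _ hlt, map_pow, hvB, zm0_pow]
    apply zm0_congr
    norm_num
  have hr16 : ¬ (r:ℤ) ∣ 16 := by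
    intro hd
    rw [show (16:ℤ) = 2^4 by norm_num] at hd
    have h2 : (r:ℤ) ∣ 2 := hprimeInt.dvd_of_dvd_pow hd
    have := Int.le_of_dvd (by norm_num) h2
    omega
  have hv16 : β'.intValuation (16 : 𝓞 K) = 1 := by
    have h16 : (16 : 𝓞 K) = (((16:ℤ)) : 𝓞 K) := by push_cast; ring
    rw [h16]
    exact hval1 16 hr16
  have hvC4 : β'.intValuation (16*(A^2 + A*B + B^2)) = (ofAdd (-4:ℤ) : Multiplicative ℤ) := by
    rw [map_mul, hv16, hvcore, one_mul]
  have hvDD : β'.intValuation (16*(A*B)^2*(A+B)^2)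
      = (ofAdd (-(10 + 4*((e:ℤ)*(w:ℤ)))) : Multiplicative ℤ) := by
    rw [map_mul, map_mul, hv16, one_mul, map_pow, map_pow, map_mul, hvA, hvB, hvApB,
      zm0_mul, zm0_pow, zm0_pow, zm0_mul]
    apply zm0_congr
    push_cast
    ring
  -- the curve quantities
  have h16K : ((16 : 𝓞 K) : K) = 16 := by exact_mod_cast rfl
  have hc4 : E.c₄ = ((16*(A^2 + A*B + B^2) : 𝓞 K) : K) := by
    subst hE
    simp only [WeierstrassCurve.c₄, WeierstrassCurve.b₂, WeierstrassCurve.b₄]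
    push_cast [h16K]
    ring
  have hΔ : E.Δ = ((16*(A*B)^2*(A+B)^2 : 𝓞 K) : K) := by
    subst hE
    simp only [WeierstrassCurve.Δ, WeierstrassCurve.b₂, WeierstrassCurve.b₄,
      WeierstrassCurve.b₆, WeierstrassCurve.b₈]
    push_cast [h16K]
    ring
  have hvalmap : ∀ a : 𝓞 K, β'.valuation K ((a : K)) = β'.intValuation a := fun a => by
    rw [← IsDedekindDomain.HeightOneSpectrum.valuation_of_algebraMap (K := K) β' a]
  -- conclusion
  refine ⟨2 - 4*((e:ℤ)*(w:ℤ)), by linarith, ?_, ?_⟩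
  · intro hdvd
    have hwZ : (w:ℤ) = (k:ℤ)*(p:ℤ) - 1 := by
      have : ((k*p : ℕ) : ℤ) = ((w + 1 : ℕ) : ℤ) := by rw [hkpw]
      push_cast at this
      linarith
    have h2r : (p:ℤ) ∣ 2*((r:ℕ):ℤ) := by
      have hterm : 2*((r:ℕ):ℤ) = (2 - 4*((e:ℤ)*(w:ℤ))) + (p:ℤ)*(4*(e:ℤ)*(k:ℤ)) := by
        rw [hwZ, show ((r:ℕ):ℤ) = 2*(e:ℤ)+1 by exact_mod_cast congrArg Nat.cast he2.symm]
        ring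
      rw [hterm]
      exact dvd_add hdvd (Dvd.intro _ rfl)
    have hpInt : Prime ((p:ℕ):ℤ) := Nat.prime_iff_prime_int.mp hp
    rcases hpInt.dvd_mul.mp h2r with h | h
    · have := Int.le_of_dvd (by norm_num) h
      have := hp.two_le
      omega
    · have hpl : p ∣ r := by exact_mod_cast h
      exact hpr ((Nat.prime_dvd_prime_iff_eq hp hr).mp hpl)
  · rw [hc4, hΔ, map_div₀, map_pow, hvalmap, hvalmap, hvC4, hvDD, zm0_pow, zm0_div]
    apply zm0_congr
    push_cast
    ring
end
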